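/- arXiv:1602.03899 — 3 statements merged into one kernel-verified Lean document; each statement's English description precedes it below -/
import Mathlib

section
/- Let G be a graph with n ≥ 4 vertices. Then κ(M[IAS(G)]) < n if and only if some graph locally equivalent to G has a vertex of degree < (n−1)/2. -/
open scoped ENat

variable {V : Type*} [Fintype V] [DecidableEq V]

/-- The column of the matrix `IAS(G) = (I | A | A+I)` indexed by `(v, i)`:
`i = 0` gives `φ(v)` (identity column), `i = 1` gives `χ(v)` (column of `A`),
`i = 2` gives `ψ(v)` (column of `A + I`). -/
def iasCol (A : Matrix V V (ZMod 2)) : V × Fin 3 → V → ZMod 2 :=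
  fun p w =>
    if p.2 = 0 then (if w = p.1 then 1 else 0)
    else if p.2 = 1 then A w p.1
    else A w p.1 + (if w = p.1 then 1 else 0)

/-- The rank of a subset of the ground set `W(G) = V × Fin 3` of the isotropic
matroid: the GF(2)-rank of the corresponding set of columns. -/
noncomputable def iasRank (A : Matrix V V (ZMod 2)) (S : Set (V × Fin 3)) : ℕ :=
  Module.finrank (ZMod 2) (Submodule.span (ZMod 2) (iasCol A '' S))

/-- The connectivity function `λ(S) = r(S) + r(W - S) - r(M)`. -/
noncomputable def iasLambda (A : Matrix V V (ZMod 2)) (S : Set (V × Fin 3)) : ℕ :=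
  iasRank A S + iasRank A Sᶜ - iasRank A Set.univ

/-- Independence in the isotropic matroid. -/
def iasIndep (A : Matrix V V (ZMod 2)) (S : Set (V × Fin 3)) : Prop :=
  LinearIndependent (ZMod 2) (fun s : S => iasCol A s.1)

/-- Circuits of the isotropic matroid: minimal dependent sets. -/
def iasCircuit (A : Matrix V V (ZMod 2)) (C : Set (V × Fin 3)) : Prop :=
  ¬ iasIndep A C ∧ ∀ S ⊂ C, iasIndep A S

/-- An ordinary `k`-separation: `λ(S) < k` and `|S|, |W - S| ≥ k`. -/
def OrdinarySep (A : Matrix V V (ZMod 2)) (k : ℕ) (S : Set (V × Fin 3)) : Prop :=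
  0 < k ∧ iasLambda A S < k ∧ k ≤ S.ncard ∧ k ≤ Sᶜ.ncard

/-- A cyclic `k`-separation: `λ(S) < k` and both `S` and `W - S` are dependent. -/
def CyclicSep (A : Matrix V V (ZMod 2)) (k : ℕ) (S : Set (V × Fin 3)) : Prop :=
  0 < k ∧ iasLambda A S < k ∧ ¬ iasIndep A S ∧ ¬ iasIndep A Sᶜ

/-- A vertical `k`-separation: `λ(S) < k` and `r(S), r(W - S) ≥ k`. -/
def VerticalSep (A : Matrix V V (ZMod 2)) (k : ℕ) (S : Set (V × Fin 3)) : Prop :=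
  0 < k ∧ iasLambda A S < k ∧ k ≤ iasRank A S ∧ k ≤ iasRank A Sᶜ

/-- `τ(M) = min {k : M has an ordinary k-separation}`, with `min ∅ = ∞`. -/
noncomputable def iasTau (A : Matrix V V (ZMod 2)) : ℕ∞ :=
  sInf {k : ℕ∞ | ∃ m : ℕ, (m : ℕ∞) = k ∧ ∃ S, OrdinarySep A m S}

/-- `κ*(M) = min ({k : M has a cyclic k-separation} ∪ {|W| - r(M)})`. -/
noncomputable def iasKappaStar (A : Matrix V V (ZMod 2)) : ℕ :=
  sInf ({k : ℕ | ∃ S, CyclicSep A k S} ∪ {3 * Fintype.card V - iasRank A Set.univ})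

/-- `κ(M) = min ({k : M has a vertical k-separation} ∪ {r(M)})`. -/
noncomputable def iasKappa (A : Matrix V V (ZMod 2)) : ℕ :=
  sInf ({k : ℕ | ∃ S, VerticalSep A k S} ∪ {iasRank A Set.univ})

/-- The simple graph underlying a looped simple graph given by its adjacency matrix. -/
def toSimpleGraph (A : Matrix V V (ZMod 2)) : SimpleGraph V where
  Adj v w := v ≠ w ∧ A v w = 1 ∧ A w v = 1
  symm := ⟨fun v w ⟨h1, h2, h3⟩ => ⟨Ne.symm h1, h3, h2⟩⟩
  loopless := ⟨fun v h => h.1 rfl⟩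

/-- The open neighborhood `N_G(v)`. -/
def nbhd (A : Matrix V V (ZMod 2)) (v : V) : Set V := {u | u ≠ v ∧ A v u = 1}

/-- `v` is a pendant vertex: `N_G(v) = {w}` for some `w`. -/
def IsPendant (A : Matrix V V (ZMod 2)) (v : V) : Prop := ∃ w, nbhd A v = {w}

/-- `G` has a pair of twin vertices: `v ≠ w` with `N_G(v) - {w} = N_G(w) - {v}`. -/
def HasTwins (A : Matrix V V (ZMod 2)) : Prop :=
  ∃ v w, v ≠ w ∧ nbhd A v \ {w} = nbhd A w \ {v}

/-- The cut-rank `c_G(X)`: the GF(2)-rank of the submatrix `A[V - X, X]`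
(columns indexed by `X`, rows indexed by `V - X`). -/
noncomputable def cutRank (A : Matrix V V (ZMod 2)) (X : Set V) : ℕ :=
  Module.finrank (ZMod 2)
    (Submodule.span (ZMod 2) ((fun x : V => fun w : ↥(Xᶜ) => A w.1 x) '' X))

/-- `τ_G(X) = ⋃_{x ∈ X} τ_G(x)`, the union of the vertex triples of members of `X`. -/
def tauSet (X : Set V) : Set (V × Fin 3) := {p | p.1 ∈ X}

/-- Loop complementation at `v`. -/
def loopComp (A : Matrix V V (ZMod 2)) (v : V) : Matrix V V (ZMod 2) :=
  fun x y => A x y + if x = v ∧ y = v then 1 else 0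

/-- Simple local complementation at `v`. -/
def simpleLocalComp (A : Matrix V V (ZMod 2)) (v : V) : Matrix V V (ZMod 2) :=
  fun x y => A x y +
    if x ≠ y ∧ (x ≠ v ∧ A v x = 1) ∧ (y ≠ v ∧ A v y = 1) then 1 else 0

/-- Non-simple local complementation at `v`. -/
def nonSimpleLocalComp (A : Matrix V V (ZMod 2)) (v : V) : Matrix V V (ZMod 2) :=
  fun x y => simpleLocalComp A v x y + if x = y ∧ x ≠ v ∧ A v x = 1 then 1 else 0

/-- One local move. -/
def LocalStep (A B : Matrix V V (ZMod 2)) : Prop :=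
  ∃ v, B = loopComp A v ∨ B = simpleLocalComp A v ∨ B = nonSimpleLocalComp A v

/-- Local equivalence: a finite sequence of loop complementations and
(simple or non-simple) local complementations. -/
def LocallyEquiv (A B : Matrix V V (ZMod 2)) : Prop :=
  Relation.ReflTransGen LocalStep A B

/-- `G` has a split: a bipartition `(V₁, V₂)` of `V` with `|V₁|, |V₂| ≥ 2` such that the
GF(2)-rank of `A[V₁, V₂]` is at most 1. -/
def HasSplit (A : Matrix V V (ZMod 2)) : Prop :=
  ∃ X : Set V, 2 ≤ X.ncard ∧ 2 ≤ Xᶜ.ncard ∧ cutRank A X ≤ 1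

/-- A transverse circuit: a circuit of the isotropic matroid meeting each
vertex triple at most once. -/
def IsTransverseCircuit (A : Matrix V V (ZMod 2)) (C : Set (V × Fin 3)) : Prop :=
  iasCircuit A C ∧ ∀ p ∈ C, ∀ q ∈ C, p.1 = q.1 → p = q

/-- An isotropic `k`-separation of `G`: `|X|, |V - X| ≥ k` and `c_G(X) < k`. -/
def IsotropicSep (A : Matrix V V (ZMod 2)) (k : ℕ) (X : Set V) : Prop :=
  k ≤ X.ncard ∧ k ≤ Xᶜ.ncard ∧ cutRank A X < k

/-- The isotropic connectivity `κ_B(G)`, with `min ∅ = ∞`. -/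
noncomputable def kappaB (A : Matrix V V (ZMod 2)) : ℕ∞ :=
  sInf {j : ℕ∞ | ∃ k : ℕ, (k : ℕ∞) = j ∧ ∃ X, IsotropicSep A k X}

/-- The 5-cycle `C₅`. -/
def C5mat : Matrix (Fin 5) (Fin 5) (ZMod 2) :=
  fun i j => if (i.val + 1) % 5 = j.val ∨ (j.val + 1) % 5 = i.val then 1 else 0

/-- The wheel `W₅` : a 5-cycle on `{0,…,4}` plus a hub `5` adjacent to all. -/
def W5mat : Matrix (Fin 6) (Fin 6) (ZMod 2) :=
  fun i j =>
    if (i.val = 5 ∧ j.val ≠ 5) ∨ (j.val = 5 ∧ i.val ≠ 5) then 1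
    else if i.val ≠ 5 ∧ j.val ≠ 5 ∧ ((i.val + 1) % 5 = j.val ∨ (j.val + 1) % 5 = i.val) then 1
    else 0

set_option linter.unusedSectionVars false

section MoveAlgebra
open Matrix Finset

variable {V : Type*} [Fintype V] [DecidableEq V]
variable {A B : Matrix V V (ZMod 2)} {v : V}

private lemma z2 (t : ZMod 2) : t + t = 0 := by revert t; decide

private lemma g2 (a i : ZMod 2) : a + i + i = a := by revert a i; decide

private lemma g4 (a i j : ZMod 2) : a + i + j + i + j = a := by revert a i j; decide

lemma simple_row (A : Matrix V V (ZMod 2)) (v y : V) :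
    simpleLocalComp A v v y = A v y := by
  simp [simpleLocalComp]

lemma nonsimple_row (A : Matrix V V (ZMod 2)) (v y : V) :
    nonSimpleLocalComp A v v y = A v y := by
  simp [nonSimpleLocalComp, simpleLocalComp]

lemma simple_diag (A : Matrix V V (ZMod 2)) (v y : V) :
    simpleLocalComp A v y y = A y y := by
  simp [simpleLocalComp]

lemma loop_invol (A : Matrix V V (ZMod 2)) (v : V) :
    loopComp (loopComp A v) v = A := by
  funext x y
  simp only [loopComp]
  exact g2 _ _

lemma simple_invol (A : Matrix V V (ZMod 2)) (v : V) :
    simpleLocalComp (simpleLocalComp A v) v = A := by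
  funext x y
  simp only [simpleLocalComp, ne_eq, not_true_eq_false, false_and, and_false, if_false,
    add_zero, eq_self_iff_true]
  exact g2 _ _

lemma nonsimple_invol (A : Matrix V V (ZMod 2)) (v : V) :
    nonSimpleLocalComp (nonSimpleLocalComp A v) v = A := by
  funext x y
  simp only [nonSimpleLocalComp, simpleLocalComp, ne_eq, not_true_eq_false, false_and,
    and_false, if_false, add_zero, eq_self_iff_true]
  exact g4 _ _ _

lemma localStep_symm (h : LocalStep A B) : LocalStep B A := by
  obtain ⟨v, h | h | h⟩ := h
  · exact ⟨v, Or.inl (by rw [h, loop_invol])⟩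
  · exact ⟨v, Or.inr (Or.inl (by rw [h, simple_invol]))⟩
  · exact ⟨v, Or.inr (Or.inr (by rw [h, nonsimple_invol]))⟩

lemma isSymm_apply {A : Matrix V V (ZMod 2)} (hA : A.IsSymm) (i j : V) :
    A i j = A j i := by
  conv_lhs => rw [← hA]
  rfl

lemma loop_isSymm (hA : A.IsSymm) : (loopComp A v).IsSymm := by
  apply Matrix.IsSymm.ext
  intro i j
  simp only [loopComp]
  rw [isSymm_apply hA j i]
  congr 1
  simp [and_comm]

lemma simple_isSymm (hA : A.IsSymm) : (simpleLocalComp A v).IsSymm := by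
  apply Matrix.IsSymm.ext
  intro i j
  simp only [simpleLocalComp]
  rw [isSymm_apply hA j i]
  congr 1
  exact if_congr ⟨fun ⟨h1, h2, h3⟩ => ⟨Ne.symm h1, h3, h2⟩,
    fun ⟨h1, h2, h3⟩ => ⟨Ne.symm h1, h3, h2⟩⟩ rfl rfl

lemma nonsimple_isSymm (hA : A.IsSymm) : (nonSimpleLocalComp A v).IsSymm := by
  apply Matrix.IsSymm.ext
  intro i j
  simp only [nonSimpleLocalComp, simpleLocalComp]
  rw [isSymm_apply hA j i]
  have e1 : (if j ≠ i ∧ (j ≠ v ∧ A v j = 1) ∧ i ≠ v ∧ A v i = 1 then (1 : ZMod 2) else 0)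
      = if i ≠ j ∧ (i ≠ v ∧ A v i = 1) ∧ j ≠ v ∧ A v j = 1 then 1 else 0 :=
    if_congr ⟨fun ⟨h1, h2, h3⟩ => ⟨Ne.symm h1, h3, h2⟩,
      fun ⟨h1, h2, h3⟩ => ⟨Ne.symm h1, h3, h2⟩⟩ rfl rfl
  have e2 : (if j = i ∧ j ≠ v ∧ A v j = 1 then (1 : ZMod 2) else 0)
      = if i = j ∧ i ≠ v ∧ A v i = 1 then 1 else 0 :=
    if_congr ⟨fun ⟨h1, h2, h3⟩ => by subst h1; exact ⟨rfl, h2, h3⟩,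
      fun ⟨h1, h2, h3⟩ => by subst h1; exact ⟨rfl, h2, h3⟩⟩ rfl rfl
  rw [e1, e2]

lemma localStep_isSymm (h : LocalStep A B) (hA : A.IsSymm) : B.IsSymm := by
  obtain ⟨v, h | h | h⟩ := h <;> subst h
  · exact loop_isSymm hA
  · exact simple_isSymm hA
  · exact nonsimple_isSymm hA

end MoveAlgebra
section PairTransport
open Matrix Finset

variable {V : Type*} [Fintype V] [DecidableEq V]
variable {A B : Matrix V V (ZMod 2)} {v : V}

/-- The per-vertex covering condition. -/
def Cond (A : Matrix V V (ZMod 2)) (a b : V → ZMod 2) : Prop :=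
  ∀ v, (a v = 0 ∧ A.mulVec a v = 0) ∨ (b v = 0 ∧ A.mulVec b v = 0)

def GoodPair (A : Matrix V V (ZMod 2)) : Prop :=
  ∃ a b : V → ZMod 2, a ≠ 0 ∧ b ≠ 0 ∧ Cond A a b

/-- supp(a) ∪ supp(Aa). -/
def Uset (A : Matrix V V (ZMod 2)) (a : V → ZMod 2) : Set V :=
  {v | ¬ (a v = 0 ∧ A.mulVec a v = 0)}

private lemma znot1 {x : ZMod 2} (h : ¬ x = 1) : x = 0 := by revert h; revert x; decide

lemma mulVec_eq_sum (M : Matrix V V (ZMod 2)) (w : V → ZMod 2) (y : V) :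
    M.mulVec w y = ∑ z, M y z * w z := by
  simp [Matrix.mulVec, dotProduct]

lemma loop_mulVec (A : Matrix V V (ZMod 2)) (v : V) (w : V → ZMod 2) (y : V) :
    (loopComp A v).mulVec w y = A.mulVec w y + (if y = v then w v else 0) := by
  simp only [_root_.mulVec_eq_sum, loopComp, add_mul, Finset.sum_add_distrib]
  congr 1
  by_cases hy : y = v
  · subst hy
    simp [Finset.sum_ite_eq, ite_mul]
  · simp [hy]

lemma simple_mulVec (A : Matrix V V (ZMod 2)) (v : V) (w : V → ZMod 2) (y : V) :
    (simpleLocalComp A v).mulVec w y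
      = A.mulVec w y +
        (if y ≠ v ∧ A v y = 1 then (A.mulVec w v + A v v * w v) + w y else 0) := by
  simp only [_root_.mulVec_eq_sum, simpleLocalComp, add_mul, Finset.sum_add_distrib]
  congr 1
  by_cases hy : y ≠ v ∧ A v y = 1
  · rw [if_pos hy]
    have key : ∀ z : V,
        (if y ≠ z ∧ (y ≠ v ∧ A v y = 1) ∧ (z ≠ v ∧ A v z = 1) then (1 : ZMod 2) else 0) * w z
          = (A v z * w z + (if z = v then A v v * w v else 0)) + (if z = y then w y else 0) := by
      intro z
      by_cases hzv : z = v
      · rw [if_neg (fun h => h.2.2.1 hzv), zero_mul, if_pos hzv, if_neg (fun h : z = y => hy.1 (hzv ▸ h ▸ rfl))]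
        rw [add_zero, hzv, z2]
      · by_cases hzy : z = y
        · rw [if_neg (fun h => h.1 hzy.symm), zero_mul, if_neg hzv, add_zero, if_pos hzy, hzy, hy.2, one_mul, z2]
        · rw [if_neg hzv, if_neg hzy, add_zero, add_zero]
          by_cases hz1 : A v z = 1
          · rw [if_pos ⟨fun h => hzy h.symm, hy, hzv, hz1⟩, hz1, one_mul]
          · rw [if_neg (fun h => hz1 h.2.2.2), znot1 hz1, zero_mul]
    rw [Finset.sum_congr rfl fun z _ => key z]
    rw [Finset.sum_add_distrib, Finset.sum_add_distrib]
    congr 2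
    · simp [Finset.sum_ite_eq]
    · simp [Finset.sum_ite_eq]
  · rw [if_neg hy]
    apply Finset.sum_eq_zero
    intro z _
    rw [if_neg (fun h => hy h.2.1), zero_mul]

lemma nonsimple_mulVec (A : Matrix V V (ZMod 2)) (v : V) (w : V → ZMod 2) (y : V) :
    (nonSimpleLocalComp A v).mulVec w y
      = (simpleLocalComp A v).mulVec w y + (if y ≠ v ∧ A v y = 1 then w y else 0) := by
  simp only [_root_.mulVec_eq_sum, nonSimpleLocalComp, add_mul, Finset.sum_add_distrib]
  congr 1
  by_cases hy : y ≠ v ∧ A v y = 1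
  · have : ∀ z : V, (if y = z ∧ y ≠ v ∧ A v y = 1 then (1 : ZMod 2) else 0) * w z
        = if z = y then w y else 0 := by
      intro z
      by_cases hzy : z = y
      · subst hzy; rw [if_pos ⟨rfl, hy⟩, if_pos rfl, one_mul]
      · rw [if_neg (fun h => hzy h.1.symm), if_neg hzy, zero_mul]
    rw [Finset.sum_congr rfl fun z _ => this z, if_pos hy]
    simp [Finset.sum_ite_eq]
  · rw [if_neg hy]
    apply Finset.sum_eq_zero
    intro z _
    rw [if_neg (fun h => hy h.2), zero_mul]

lemma shift_mulVec (M : Matrix V V (ZMod 2)) (w : V → ZMod 2) (v : V) (γ : ZMod 2) (y : V) :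
    M.mulVec (fun t => w t + if t = v then γ else 0) y = M.mulVec w y + M y v * γ := by
  simp only [_root_.mulVec_eq_sum, mul_add, Finset.sum_add_distrib, mul_ite, mul_zero]
  congr 1
  simp [Finset.sum_ite_eq]

end PairTransport
section PairTransport2
open Matrix Finset

variable {V : Type*} [Fintype V] [DecidableEq V]
variable {A B : Matrix V V (ZMod 2)} {v : V}

lemma simple_pair (hA : A.IsSymm) (v : V) (a a' : V → ZMod 2)
    (ha' : a' = fun t => a t + if t = v then A.mulVec a v + A v v * a v else 0) (y : V) :
    ((a' y = 0 ∧ (simpleLocalComp A v).mulVec a' y = 0) ↔ (a y = 0 ∧ A.mulVec a y = 0)) := by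
  have key2 : ∀ α β d : ZMod 2,
      ((α + (β + d * α) = 0 ∧ β + d * (β + d * α) = 0) ↔ (α = 0 ∧ β = 0)) := by decide
  have key3 : ∀ α β g : ZMod 2, ((α = 0 ∧ β + g + (g + α) = 0) ↔ (α = 0 ∧ β = 0)) := by decide
  have hshift : ∀ y' : V, A.mulVec a' y'
      = A.mulVec a y' + A y' v * (A.mulVec a v + A v v * a v) := by
    intro y'; rw [ha']; exact shift_mulVec A a v _ y'
  have ha'v : a' v = a v + (A.mulVec a v + A v v * a v) := by rw [ha']; simp
  have hγ' : A.mulVec a' v + A v v * a' v = A.mulVec a v + A v v * a v := by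
    rw [hshift v, ha'v]
    have key : ∀ α β d : ZMod 2,
        β + d * (β + d * α) + d * (α + (β + d * α)) = β + d * α := by decide
    exact key (a v) (A.mulVec a v) (A v v)
  by_cases hyv : y = v
  · subst hyv
    rw [ha'v, simple_mulVec A y a' y, if_neg (fun h => h.1 rfl), add_zero, hshift y]
    exact key2 (a y) (A.mulVec a y) (A y y)
  · have ha'y : a' y = a y := by simp [ha', hyv]
    rw [ha'y, simple_mulVec A v a' y, hshift y]
    by_cases h1 : A v y = 1
    · rw [if_pos ⟨hyv, h1⟩, hγ', ha'y, isSymm_apply hA y v, h1, one_mul]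
      exact key3 (a y) (A.mulVec a y) _
    · rw [if_neg (fun h => h1 h.2), isSymm_apply hA y v, znot1 h1, zero_mul, add_zero, add_zero]

lemma nonsimple_pair (hA : A.IsSymm) (v : V) (a a' : V → ZMod 2)
    (ha' : a' = fun t => a t + if t = v then A.mulVec a v + A v v * a v else 0) (y : V) :
    ((a' y = 0 ∧ (nonSimpleLocalComp A v).mulVec a' y = 0) ↔ (a y = 0 ∧ A.mulVec a y = 0)) := by
  have key4 : ∀ α s : ZMod 2, ((α = 0 ∧ s + α = 0) ↔ (α = 0 ∧ s = 0)) := by decide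
  rw [nonsimple_mulVec A v a' y]
  refine Iff.trans ?_ (simple_pair hA v a a' ha' y)
  by_cases h1 : y ≠ v ∧ A v y = 1
  · rw [if_pos h1]; exact key4 _ _
  · rw [if_neg h1, add_zero]

lemma loop_pair (v : V) (a : V → ZMod 2) (y : V) :
    ((a y = 0 ∧ (loopComp A v).mulVec a y = 0) ↔ (a y = 0 ∧ A.mulVec a y = 0)) := by
  rw [loop_mulVec]
  by_cases hyv : y = v
  · subst hyv
    rw [if_pos rfl]
    have key : ∀ α β : ZMod 2, ((α = 0 ∧ β + α = 0) ↔ (α = 0 ∧ β = 0)) := by decide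
    exact key _ _
  · rw [if_neg hyv, add_zero]

lemma pair_ne_zero {a a' : V → ZMod 2}
    (hiff : ∀ y, (a' y = 0 ∧ B.mulVec a' y = 0) ↔ (a y = 0 ∧ A.mulVec a y = 0))
    (ha : a ≠ 0) : a' ≠ 0 := by
  intro h0
  apply ha
  funext y
  have : a' y = 0 ∧ B.mulVec a' y = 0 := by
    subst h0; exact ⟨rfl, by rw [Matrix.mulVec_zero]; rfl⟩
  exact ((hiff y).mp this).1

lemma step_pair (hA : A.IsSymm) (h : LocalStep A B) (a : V → ZMod 2) :
    ∃ a' : V → ZMod 2, ∀ y, ((a' y = 0 ∧ B.mulVec a' y = 0) ↔ (a y = 0 ∧ A.mulVec a y = 0)) := by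
  obtain ⟨v, hB | hB | hB⟩ := h <;> subst hB
  · exact ⟨a, fun y => loop_pair v a y⟩
  · exact ⟨_, fun y => simple_pair hA v a _ rfl y⟩
  · exact ⟨_, fun y => nonsimple_pair hA v a _ rfl y⟩

lemma step_goodPair (hA : A.IsSymm) (h : LocalStep A B) (hG : GoodPair A) : GoodPair B := by
  obtain ⟨a, b, ha, hb, hC⟩ := hG
  obtain ⟨a', hiffa⟩ := step_pair hA h a
  obtain ⟨b', hiffb⟩ := step_pair hA h b
  refine ⟨a', b', pair_ne_zero hiffa ha, pair_ne_zero hiffb hb, fun w => ?_⟩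
  rcases hC w with hc | hc
  · exact Or.inl ((hiffa w).mpr hc)
  · exact Or.inr ((hiffb w).mpr hc)

lemma locallyEquiv_isSymm (h : LocallyEquiv A B) (hA : A.IsSymm) : B.IsSymm := by
  induction h with
  | refl => exact hA
  | tail _ hstep ih => exact localStep_isSymm hstep ih

lemma locallyEquiv_goodPair_rev (h : LocallyEquiv A B) (hA : A.IsSymm) (hG : GoodPair B) :
    GoodPair A := by
  induction h with
  | refl => exact hG
  | @tail C B h1 h2 ih =>
      exact ih (step_goodPair (localStep_isSymm h2 (locallyEquiv_isSymm h1 hA))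
        (localStep_symm h2) hG)

lemma simple_Uset (hA : A.IsSymm) (v : V) (a a' : V → ZMod 2)
    (ha' : a' = fun t => a t + if t = v then A.mulVec a v + A v v * a v else 0) :
    Uset (simpleLocalComp A v) a' = Uset A a := by
  ext y
  exact not_congr (simple_pair hA v a a' ha' y)

end PairTransport2
section RankPart
open Matrix Finset

variable {V : Type*} [Fintype V] [DecidableEq V]
variable {A : Matrix V V (ZMod 2)}

lemma dot_col0 (a : V → ZMod 2) (v : V) : a ⬝ᵥ iasCol A (v, 0) = a v := by
  simp [iasCol, dotProduct, mul_ite, Finset.sum_ite_eq]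

lemma dot_col1 (hA : A.IsSymm) (a : V → ZMod 2) (v : V) :
    a ⬝ᵥ iasCol A (v, 1) = A.mulVec a v := by
  simp only [iasCol, dotProduct, _root_.mulVec_eq_sum,
    show ((1 : Fin 3) = 0) = False from by decide, show ((1 : Fin 3) = 1) = True from by decide,
    if_false, if_true]
  exact Finset.sum_congr rfl fun w _ => by rw [isSymm_apply hA v w, mul_comm]

lemma dot_col2 (hA : A.IsSymm) (a : V → ZMod 2) (v : V) :
    a ⬝ᵥ iasCol A (v, 2) = A.mulVec a v + a v := by
  simp only [iasCol, dotProduct,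
    show ((2 : Fin 3) = 0) = False from by decide, show ((2 : Fin 3) = 1) = False from by decide,
    if_false]
  have : ∀ w, a w * (A w v + if w = v then 1 else 0)
      = a w * A w v + a w * (if w = v then 1 else 0) := fun w => mul_add _ _ _
  rw [Finset.sum_congr rfl fun w _ => this w, Finset.sum_add_distrib]
  congr 1
  · rw [_root_.mulVec_eq_sum]
    exact Finset.sum_congr rfl fun w _ => by rw [isSymm_apply hA v w, mul_comm]
  · simp [mul_ite, Finset.sum_ite_eq]

/-- The dot-product functional as a linear map. -/
def dotL (a : V → ZMod 2) : (V → ZMod 2) →ₗ[ZMod 2] ZMod 2 where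
  toFun y := a ⬝ᵥ y
  map_add' y z := by simp [dotProduct, mul_add, Finset.sum_add_distrib]
  map_smul' r y := by
    simp [dotProduct, Finset.mul_sum, smul_eq_mul, mul_left_comm]

lemma exists_ann (W : Submodule (ZMod 2) (V → ZMod 2)) (hW : W ≠ ⊤) :
    ∃ a : V → ZMod 2, a ≠ 0 ∧ ∀ y ∈ W, a ⬝ᵥ y = 0 := by
  have hx : ∃ x, x ∉ W := by
    by_contra hc
    push_neg at hc
    exact hW (eq_top_iff.mpr fun x _ => hc x)
  obtain ⟨x, hx⟩ := hx
  obtain ⟨f, hfx, hmap⟩ := Submodule.exists_dual_map_eq_bot_of_notMem hx inferInstance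
  have hexp : ∀ y, f y = ∑ i, y i • f (fun j => if i = j then 1 else 0) :=
    fun y => LinearMap.pi_apply_eq_sum_univ f y
  refine ⟨fun v => f (fun j => if v = j then 1 else 0), ?_, ?_⟩
  · intro h0
    apply hfx
    rw [hexp x]
    apply Finset.sum_eq_zero
    intro i _
    have : f (fun j => if i = j then 1 else 0) = 0 := congrFun h0 i
    rw [this, smul_zero]
  · intro y hy
    have hf : f y = 0 := by
      have : f y ∈ Submodule.map f W := ⟨y, hy, rfl⟩
      rw [hmap] at this
      exact this
    have hdot : (fun v => f (fun j => if v = j then 1 else 0)) ⬝ᵥ y = f y := by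
      rw [hexp y]
      simp only [dotProduct, smul_eq_mul]
      exact Finset.sum_congr rfl fun i _ => mul_comm _ _
    exact hdot.trans hf

lemma rank_lt_of_ann {S : Set (V × Fin 3)} {a : V → ZMod 2} (ha : a ≠ 0)
    (h : ∀ p ∈ S, a ⬝ᵥ iasCol A p = 0) : iasRank A S < Fintype.card V := by
  have hle : Submodule.span (ZMod 2) (iasCol A '' S) ≤ LinearMap.ker (dotL a) := by
    rw [Submodule.span_le]
    rintro y ⟨p, hp, rfl⟩
    exact h p hp
  have hker : LinearMap.ker (dotL a) < ⊤ := by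
    rw [lt_top_iff_ne_top]
    intro htop
    apply ha
    funext v
    have : dotL a (fun j => if v = j then 1 else 0) = 0 := by
      rw [← LinearMap.mem_ker, htop]; trivial
    simpa [dotL, dotProduct, mul_ite, Finset.sum_ite_eq'] using this
  calc iasRank A S ≤ Module.finrank (ZMod 2) (LinearMap.ker (dotL a)) :=
        Submodule.finrank_mono hle
    _ < Module.finrank (ZMod 2) (V → ZMod 2) := Submodule.finrank_lt hker.ne
    _ = Fintype.card V := Module.finrank_fintype_fun_eq_card _

lemma rank_full_of_phi {S : Set (V × Fin 3)} (h : ∀ v : V, ((v, 0) : V × Fin 3) ∈ S) :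
    iasRank A S = Fintype.card V := by
  have hcol : ∀ i : V, iasCol A ((i, 0) : V × Fin 3) = fun j => if i = j then (1 : ZMod 2) else 0 := by
    intro i
    funext j
    by_cases hij : i = j
    · subst hij; simp [iasCol]
    · simp [iasCol, if_neg (fun hh : j = i => hij hh.symm), if_neg hij]
  have htop : Submodule.span (ZMod 2) (iasCol A '' S) = ⊤ := by
    rw [eq_top_iff]
    rintro x -
    rw [pi_eq_sum_univ x]
    apply Submodule.sum_mem
    intro i _
    apply Submodule.smul_mem
    rw [← hcol i]
    exact Submodule.subset_span ⟨(i, 0), h i, rfl⟩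
  rw [iasRank, htop, finrank_top, Module.finrank_fintype_fun_eq_card]

lemma iasRank_univ : iasRank A Set.univ = Fintype.card V :=
  rank_full_of_phi fun _ => Set.mem_univ _

lemma iasRank_le (S : Set (V × Fin 3)) : iasRank A S ≤ Fintype.card V := by
  have := Submodule.finrank_le (Submodule.span (ZMod 2) (iasCol A '' S))
  rwa [Module.finrank_fintype_fun_eq_card] at this

end RankPart
section KappaPart
open Matrix Finset

variable {V : Type*} [Fintype V] [DecidableEq V]
variable {A : Matrix V V (ZMod 2)}

private lemma fin3_cases (i : Fin 3) : i = 0 ∨ i = 1 ∨ i = 2 := by omega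

private lemma triple_lemma : ∀ α β α' β' : ZMod 2,
    ((α = 0 ∨ α' = 0) ∧ (β = 0 ∨ β' = 0) ∧ (β + α = 0 ∨ β' + α' = 0)) →
      ((α = 0 ∧ β = 0) ∨ (α' = 0 ∧ β' = 0)) := by decide

lemma goodPair_kappa (hA : A.IsSymm) (hG : GoodPair A) :
    iasKappa A < Fintype.card V := by
  classical
  obtain ⟨a, b, ha, hb, hC⟩ := hG
  set S : Set (V × Fin 3) := {p | a ⬝ᵥ iasCol A p = 0} with hS
  have hkS : ∀ p ∈ S, a ⬝ᵥ iasCol A p = 0 := fun p hp => hp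
  have hkSc : ∀ p ∈ Sᶜ, b ⬝ᵥ iasCol A p = 0 := by
    rintro ⟨v, i⟩ hp
    rcases hC v with ⟨h1, h2⟩ | ⟨h1, h2⟩
    · exfalso
      apply hp
      show a ⬝ᵥ iasCol A (v, i) = 0
      rcases fin3_cases i with rfl | rfl | rfl
      · rw [dot_col0, h1]
      · rw [dot_col1 hA, h2]
      · rw [dot_col2 hA, h1, h2, add_zero]
    · rcases fin3_cases i with rfl | rfl | rfl
      · rw [dot_col0, h1]
      · rw [dot_col1 hA, h2]
      · rw [dot_col2 hA, h1, h2, add_zero]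
  have hrS : iasRank A S < Fintype.card V := rank_lt_of_ann ha hkS
  have hrSc : iasRank A Sᶜ < Fintype.card V := rank_lt_of_ann hb hkSc
  have hrS1 : 1 ≤ iasRank A S := by
    by_contra hc
    push_neg at hc
    have h0 : iasRank A S = 0 := by omega
    have hbot : Submodule.span (ZMod 2) (iasCol A '' S) = ⊥ :=
      Submodule.finrank_eq_zero.mp h0
    have hphi : ∀ v : V, ((v, 0) : V × Fin 3) ∈ Sᶜ := by
      intro v
      intro hvS
      have hsp : iasCol A ((v, 0) : V × Fin 3)
          ∈ Submodule.span (ZMod 2) (iasCol A '' S) :=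
        Submodule.subset_span ⟨(v, 0), hvS, rfl⟩
      rw [hbot, Submodule.mem_bot] at hsp
      have h1 : iasCol A ((v, 0) : V × Fin 3) v = 1 := by simp [iasCol]
      rw [hsp] at h1
      simp at h1
    have := rank_full_of_phi (A := A) hphi
    omega
  have hrSc1 : 1 ≤ iasRank A Sᶜ := by
    by_contra hc
    push_neg at hc
    have h0 : iasRank A Sᶜ = 0 := by omega
    have hbot : Submodule.span (ZMod 2) (iasCol A '' Sᶜ) = ⊥ :=
      Submodule.finrank_eq_zero.mp h0
    have hphi : ∀ v : V, ((v, 0) : V × Fin 3) ∈ S := by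
      intro v
      by_contra hvS
      have hsp : iasCol A ((v, 0) : V × Fin 3)
          ∈ Submodule.span (ZMod 2) (iasCol A '' Sᶜ) :=
        Submodule.subset_span ⟨(v, 0), Set.mem_compl hvS, rfl⟩
      rw [hbot, Submodule.mem_bot] at hsp
      have h1 : iasCol A ((v, 0) : V × Fin 3) v = 1 := by simp [iasCol]
      rw [hsp] at h1
      simp at h1
    have := rank_full_of_phi (A := A) hphi
    omega
  have hlameq : iasLambda A S = iasRank A S + iasRank A Sᶜ - Fintype.card V := by
    unfold iasLambda; rw [iasRank_univ]
  have hmemk : iasLambda A S + 1 ∈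
      ({k : ℕ | ∃ S, VerticalSep A k S} ∪ {iasRank A Set.univ}) :=
    Or.inl ⟨S, by omega, by omega, by omega, by omega⟩
  have hle : sInf ({k : ℕ | ∃ S, VerticalSep A k S} ∪ {iasRank A Set.univ})
      ≤ iasLambda A S + 1 := Nat.sInf_le hmemk
  have hκeq : iasKappa A
      = sInf ({k : ℕ | ∃ S, VerticalSep A k S} ∪ {iasRank A Set.univ}) := rfl
  omega

lemma kappa_goodPair (hA : A.IsSymm) (h : iasKappa A < Fintype.card V) : GoodPair A := by
  classical
  have hne : ({k : ℕ | ∃ S, VerticalSep A k S} ∪ {iasRank A Set.univ}).Nonempty :=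
    ⟨iasRank A Set.univ, Or.inr rfl⟩
  have hmem := Nat.sInf_mem hne
  rcases hmem with hmem | hmem
  · obtain ⟨S, hpos, hlam, h1, h2⟩ := hmem
    have hlameq : iasLambda A S = iasRank A S + iasRank A Sᶜ - Fintype.card V := by
      unfold iasLambda; rw [iasRank_univ]
    have hleS := iasRank_le (A := A) S
    have hleSc := iasRank_le (A := A) Sᶜ
    unfold iasKappa at h
    have hrS : iasRank A S < Fintype.card V := by omega
    have hrSc : iasRank A Sᶜ < Fintype.card V := by omega
    have hStop : Submodule.span (ZMod 2) (iasCol A '' S) ≠ ⊤ := by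
      intro htop
      have : iasRank A S = Fintype.card V := by
        rw [iasRank, htop, finrank_top, Module.finrank_fintype_fun_eq_card]
      omega
    have hSctop : Submodule.span (ZMod 2) (iasCol A '' Sᶜ) ≠ ⊤ := by
      intro htop
      have : iasRank A Sᶜ = Fintype.card V := by
        rw [iasRank, htop, finrank_top, Module.finrank_fintype_fun_eq_card]
      omega
    obtain ⟨a, ha, hka⟩ := exists_ann _ hStop
    obtain ⟨b, hb, hkb⟩ := exists_ann _ hSctop
    refine ⟨a, b, ha, hb, fun v => ?_⟩
    have hget : ∀ i : Fin 3, a ⬝ᵥ iasCol A (v, i) = 0 ∨ b ⬝ᵥ iasCol A (v, i) = 0 := by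
      intro i
      by_cases hvS : ((v, i) : V × Fin 3) ∈ S
      · exact Or.inl (hka _ (Submodule.subset_span (Set.mem_image_of_mem _ hvS)))
      · exact Or.inr (hkb _ (Submodule.subset_span ⟨(v, i), Set.mem_compl hvS, rfl⟩))
    have g0 := hget 0
    have g1 := hget 1
    have g2 := hget 2
    rw [dot_col0 a v, dot_col0 b v] at g0
    rw [dot_col1 hA a v, dot_col1 hA b v] at g1
    rw [dot_col2 hA a v, dot_col2 hA b v] at g2
    exact triple_lemma _ _ _ _ ⟨g0, g1, g2⟩
  · rw [Set.mem_singleton_iff] at hmem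
    have hκeq : iasKappa A
        = sInf ({k : ℕ | ∃ S, VerticalSep A k S} ∪ {iasRank A Set.univ}) := rfl
    rw [hmem, iasRank_univ] at hκeq
    omega

end KappaPart
section LowDeg
open Matrix Finset

variable {V : Type*} [Fintype V] [DecidableEq V]
variable {B : Matrix V V (ZMod 2)}

lemma lowdeg_goodPair (hB : B.IsSymm) (v : V)
    (hd : 2 * (nbhd B v).ncard < Fintype.card V - 1) (hn : 4 ≤ Fintype.card V) :
    GoodPair B := by
  classical
  set N : Finset V := Finset.univ.filter (fun u => u ≠ v ∧ B v u = 1) with hN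
  have hNset : nbhd B v = ↑N := by
    ext u
    simp [nbhd, hN]
  have hNcard : (nbhd B v).ncard = N.card := by rw [hNset, Set.ncard_coe_finset]
  have hvN : v ∉ N := by simp [hN]
  set K : Finset V := insert v N with hK
  have hKcard : K.card = N.card + 1 := Finset.card_insert_of_notMem hvN
  set F : (V → ZMod 2) →ₗ[ZMod 2] ((K → ZMod 2) × (N → ZMod 2)) :=
    LinearMap.prod (LinearMap.funLeft (ZMod 2) (ZMod 2) (fun k : K => (k : V)))
      ((LinearMap.funLeft (ZMod 2) (ZMod 2) (fun k : N => (k : V))).comp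
        (Matrix.mulVecLin B)) with hF
  have hker : LinearMap.ker F ≠ ⊥ := by
    intro hbot
    have hinj : Function.Injective F := LinearMap.ker_eq_bot.mp hbot
    have hle := LinearMap.finrank_le_finrank_of_injective hinj
    rw [Module.finrank_fintype_fun_eq_card] at hle
    have hprod : Module.finrank (ZMod 2) ((K → ZMod 2) × (N → ZMod 2))
        = K.card + N.card := by
      rw [Module.finrank_prod, Module.finrank_fintype_fun_eq_card,
        Module.finrank_fintype_fun_eq_card, Fintype.card_coe, Fintype.card_coe]
    rw [hprod] at hle
    rw [hNcard] at hd
    omega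
  obtain ⟨b, hbker, hbne⟩ := (Submodule.ne_bot_iff _).mp hker
  have hFb : F b = 0 := hbker
  have hbK : ∀ u ∈ K, b u = 0 := by
    intro u hu
    have := congrFun (congrArg Prod.fst hFb) ⟨u, hu⟩
    exact this
  have hbN : ∀ u ∈ N, B.mulVec b u = 0 := by
    intro u hu
    have := congrFun (congrArg Prod.snd hFb) ⟨u, hu⟩
    exact this
  refine ⟨fun w => if w = v then 1 else 0, b, ?_, hbne, ?_⟩
  · intro h0
    have := congrFun h0 v
    simp at this
  · intro w
    by_cases hw : w = v ∨ (w ≠ v ∧ B v w = 1)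
    · right
      have hwK : w ∈ K := by
        rcases hw with hw' | ⟨h1, h2⟩
        · rw [hw']; exact Finset.mem_insert_self _ _
        · exact Finset.mem_insert_of_mem (by simp [hN, h1, h2])
      refine ⟨hbK w hwK, ?_⟩
      rcases hw with hw' | ⟨h1, h2⟩
      · rw [hw', _root_.mulVec_eq_sum]
        apply Finset.sum_eq_zero
        intro z _
        by_cases hzv : z = v
        · rw [hzv, hbK v (Finset.mem_insert_self _ _), mul_zero]
        · by_cases hz1 : B v z = 1
          · rw [hbK z (Finset.mem_insert_of_mem (by simp [hN, hzv, hz1])), mul_zero]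
          · rw [znot1 hz1, zero_mul]
      · exact hbN w (by simp [hN, h1, h2])
    · left
      push_neg at hw
      obtain ⟨hw1, hw2⟩ := hw
      constructor
      · simp [hw1]
      · have hmv : B.mulVec (fun u => if u = v then (1 : ZMod 2) else 0) w = B w v := by
          simp [_root_.mulVec_eq_sum, mul_ite, Finset.sum_ite_eq']
        rw [hmv, isSymm_apply hB w v, znot1 (hw2 hw1)]

end LowDeg
section HardPart
open Matrix Finset

variable {V : Type*} [Fintype V] [DecidableEq V]
variable {A : Matrix V V (ZMod 2)}

private lemma zone {x : ZMod 2} (h : x ≠ 0) : x = 1 := by revert h; revert x; decide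

lemma reduce_step (hA : A.IsSymm) {a : V → ZMod 2} {v : V} (hav : a v ≠ 0)
    (hγ : A.mulVec a v + A v v * a v ≠ 0) :
    ∃ (A₂ : Matrix V V (ZMod 2)) (a₂ : V → ZMod 2), LocalStep A A₂ ∧ A₂.IsSymm ∧ a₂ ≠ 0 ∧
      Uset A₂ a₂ = Uset A a ∧
      (Finset.univ.filter (fun w => a₂ w ≠ 0))
        = (Finset.univ.filter (fun w => a w ≠ 0)).erase v := by
  classical
  refine ⟨simpleLocalComp A v,
    (fun t => a t + if t = v then A.mulVec a v + A v v * a v else 0),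
    ⟨v, Or.inr (Or.inl rfl)⟩, simple_isSymm hA, ?_, simple_Uset hA v a _ rfl, ?_⟩
  · exact pair_ne_zero (fun y => simple_pair hA v a _ rfl y)
      (fun h0 => hav (congrFun h0 v))
  · ext w
    simp only [Finset.mem_filter, Finset.mem_univ, true_and, Finset.mem_erase]
    by_cases hwv : w = v
    · subst hwv
      have h0 : a w + (A.mulVec a w + A w w * a w) = 0 := by
        rw [zone hγ, zone hav]
        decide
      simp [h0]
    · simp [hwv]

lemma hard_aux : ∀ m : ℕ, ∀ A : Matrix V V (ZMod 2), A.IsSymm → ∀ a : V → ZMod 2, a ≠ 0 →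
    (Finset.univ.filter (fun v => a v ≠ 0)).card ≤ m →
    ∃ B, LocallyEquiv A B ∧ ∃ w, (nbhd B w).ncard < (Uset A a).ncard := by
  intro m
  induction m with
  | zero =>
      intro A hA a ha hcard
      exfalso
      obtain ⟨v, hv⟩ := Function.ne_iff.mp ha
      have : v ∈ Finset.univ.filter (fun v => a v ≠ 0) := by
        simpa using hv
      have := Finset.card_pos.mpr ⟨v, this⟩
      omega
  | succ m ih =>
      intro A hA a ha hcard
      by_cases hdone : ∃ w, (nbhd A w).ncard < (Uset A a).ncard
      · exact ⟨A, Relation.ReflTransGen.refl, hdone⟩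
      push_neg at hdone
      by_cases hcase1 : ∃ v, a v ≠ 0 ∧ A.mulVec a v + A v v * a v ≠ 0
      · obtain ⟨v, hav, hγ⟩ := hcase1
        obtain ⟨A₂, a₂, hstep, hA₂, ha₂, hU, hfil⟩ := reduce_step hA hav hγ
        have hvmem : v ∈ Finset.univ.filter (fun w => a w ≠ 0) := by simp [hav]
        have hcard₂ : (Finset.univ.filter (fun w => a₂ w ≠ 0)).card ≤ m := by
          rw [hfil, Finset.card_erase_of_mem hvmem]
          have := Finset.card_pos.mpr ⟨v, hvmem⟩
          omega
        obtain ⟨B, hBe, w, hw⟩ := ih A₂ hA₂ a₂ ha₂ hcard₂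
        rw [hU] at hw
        exact ⟨B, Relation.ReflTransGen.head hstep hBe, w, hw⟩
      · push_neg at hcase1
        have hstuck : ∀ v, a v ≠ 0 → A.mulVec a v + A v v * a v = 0 := by
          intro v hv
          by_contra hc
          exact hc (hcase1 v hv)
        obtain ⟨x, hax'⟩ := Function.ne_iff.mp ha
        have hax : a x ≠ 0 := by simpa using hax'
        have hxU : x ∈ Uset A a := fun hcon => hax hcon.1
        have hUfin : (Uset A a).Finite := Set.toFinite _
        have hnbfin : (nbhd A x).Finite := Set.toFinite _
        -- find u ∈ nbhd A x with u ∉ Uset A a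
        have hnotsub : ¬ (nbhd A x ⊆ Uset A a) := by
          intro hsub
          have hsub' : nbhd A x ⊆ Uset A a \ {x} := by
            intro u hu
            refine ⟨hsub hu, ?_⟩
            intro hux
            rw [Set.mem_singleton_iff] at hux
            subst hux
            exact hu.1 rfl
          have h1 := Set.ncard_le_ncard hsub' hUfin.diff
          have h2 : (Uset A a \ {x}).ncard = (Uset A a).ncard - 1 :=
            Set.ncard_diff_singleton_of_mem hxU
          have h3 : 0 < (Uset A a).ncard := (Set.ncard_pos hUfin).mpr ⟨x, hxU⟩
          have h4 := hdone x
          omega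
        obtain ⟨u, hu, huU⟩ := Set.not_subset.mp hnotsub
        have hupair : a u = 0 ∧ A.mulVec a u = 0 := by
          by_contra hc
          exact huU hc
        have hγu : A.mulVec a u + A u u * a u = 0 := by
          rw [hupair.1, hupair.2, mul_zero, add_zero]
        have hxu : x ≠ u := fun h => hax (h ▸ hupair.1)
        -- the move at u leaves a unchanged
        have haeq : (fun t => a t + if t = u then A.mulVec a u + A u u * a u else 0) = a := by
          funext t
          rw [hγu]
          simp
        have hU₂ : Uset (simpleLocalComp A u) a = Uset A a := by
          have := simple_Uset hA u a _ rfl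
          rwa [haeq] at this
        -- now x is unstuck for A₂
        have hγ₂ : (simpleLocalComp A u).mulVec a x
            + (simpleLocalComp A u) x x * a x ≠ 0 := by
          rw [simple_mulVec A u a x, simple_diag]
          have hcond : x ≠ u ∧ A u x = 1 := ⟨hxu, by rw [isSymm_apply hA u x]; exact hu.2⟩
          rw [if_pos hcond, hγu, zero_add]
          have key : ∀ α β d : ZMod 2, β + d * α = 0 → α ≠ 0 → β + α + d * α ≠ 0 := by decide
          exact key (a x) (A.mulVec a x) (A x x) (hstuck x hax) hax
        obtain ⟨A₃, a₃, hstep3, hA₃, ha₃, hU₃, hfil₃⟩ :=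
          reduce_step (simple_isSymm hA) hax hγ₂
        have hxmem : x ∈ Finset.univ.filter (fun w => a w ≠ 0) := by simp [hax]
        have hcard₃ : (Finset.univ.filter (fun w => a₃ w ≠ 0)).card ≤ m := by
          rw [hfil₃, Finset.card_erase_of_mem hxmem]
          have := Finset.card_pos.mpr ⟨x, hxmem⟩
          omega
        obtain ⟨B, hBe, w, hw⟩ := ih A₃ hA₃ a₃ ha₃ hcard₃
        rw [hU₃, hU₂] at hw
        exact ⟨B, Relation.ReflTransGen.head ⟨u, Or.inr (Or.inl rfl)⟩
          (Relation.ReflTransGen.head hstep3 hBe), w, hw⟩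

end HardPart
section Assembly
open Matrix Finset

variable {V : Type*} [Fintype V] [DecidableEq V]

lemma final_forward {A : Matrix V V (ZMod 2)} (hA : A.IsSymm) (hn : 4 ≤ Fintype.card V)
    (hκ : iasKappa A < Fintype.card V) :
    ∃ B, LocallyEquiv A B ∧ ∃ v, 2 * (nbhd B v).ncard < Fintype.card V - 1 := by
  classical
  obtain ⟨a, b, ha, hb, hC⟩ := kappa_goodPair hA hκ
  have hdisj : ∀ v, v ∈ Uset A a → v ∉ Uset A b := by
    intro v hva hvb
    rcases hC v with h | h
    exacts [hva h, hvb h]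
  have hsum : (Uset A a).ncard + (Uset A b).ncard ≤ Fintype.card V := by
    have hd : Disjoint (Uset A a) (Uset A b) := Set.disjoint_left.mpr hdisj
    have h1 : (Uset A a ∪ Uset A b).ncard = (Uset A a).ncard + (Uset A b).ncard :=
      Set.ncard_union_eq hd (Set.toFinite _) (Set.toFinite _)
    have h2 : (Uset A a ∪ Uset A b).ncard ≤ (Set.univ : Set V).ncard :=
      Set.ncard_le_ncard (Set.subset_univ _) Set.finite_univ
    rw [Set.ncard_univ, Nat.card_eq_fintype_card] at h2
    omega
  have hapos : 1 ≤ (Uset A a).ncard := by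
    obtain ⟨v, hv⟩ := Function.ne_iff.mp ha
    have hv' : a v ≠ 0 := by simpa using hv
    exact (Set.ncard_pos (Set.toFinite _)).mpr ⟨v, fun h => hv' h.1⟩
  have hbpos : 1 ≤ (Uset A b).ncard := by
    obtain ⟨v, hv⟩ := Function.ne_iff.mp hb
    have hv' : b v ≠ 0 := by simpa using hv
    exact (Set.ncard_pos (Set.toFinite _)).mpr ⟨v, fun h => hv' h.1⟩
  by_cases hcmp : (Uset A a).ncard ≤ (Uset A b).ncard
  · obtain ⟨B, hBe, w, hw⟩ :=
      hard_aux (Finset.univ.filter (fun v => a v ≠ 0)).card A hA a ha le_rfl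
    exact ⟨B, hBe, w, by omega⟩
  · obtain ⟨B, hBe, w, hw⟩ :=
      hard_aux (Finset.univ.filter (fun v => b v ≠ 0)).card A hA b hb le_rfl
    exact ⟨B, hBe, w, by omega⟩

end Assembly


theorem stmt11 (A : Matrix V V (ZMod 2)) (hA : A.IsSymm) (hn : 4 ≤ Fintype.card V) :
    iasKappa A < Fintype.card V ↔
      ∃ B, LocallyEquiv A B ∧ ∃ v, 2 * (nbhd B v).ncard < Fintype.card V - 1 := by
  constructor
  · exact final_forward hA hn
  · rintro ⟨B, hAB, v, hv⟩
    exact goodPair_kappa hA (locallyEquiv_goodPair_rev hAB hA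
      (lowdeg_goodPair (locallyEquiv_isSymm hAB hA) v hv hn))
end

section
/- Let G be a graph such that M = M[IAS(G)] is 3-connected (τ(M) ≥ 3), with ground set W = W(G). Then the following three collections of subsets of W coincide: (a) the ordinary 3-separations S of M with |S|, |W−S| ≥ 6; (b) the ordinary 3-separations S of M with |S|, |W−S| ≥ 4; (c) the vertical 3-separations of M. -/
open scoped ENat

variable {V : Type*} [Fintype V] [DecidableEq V]

set_option linter.unusedSectionVars false

private lemma zmod2 (x : ZMod 2) : x = 0 ∨ x = 1 := by
  have : ∀ y : ZMod 2, y = 0 ∨ y = 1 := by decide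
  exact this x

private lemma span_top' {U : Submodule (ZMod 2) (V → ZMod 2)}
    (h : ∀ v, (fun w => if w = v then (1:ZMod 2) else 0) ∈ U) : U = ⊤ := by
  rw [eq_top_iff]
  intro x _
  rw [pi_eq_sum_univ x]
  refine Submodule.sum_mem _ fun v _ => Submodule.smul_mem _ _ ?_
  have he : (fun j => if v = j then (1:ZMod 2) else 0)
      = (fun j => if j = v then (1:ZMod 2) else 0) := by
    funext j; simp [eq_comm]
  rw [he]; exact h v

private lemma col_zero (A : Matrix V V (ZMod 2)) (v : V) :
    iasCol A (v, 0) = fun w => if w = v then (1:ZMod 2) else 0 := by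
  funext w; simp [iasCol]

private lemma col_one (A : Matrix V V (ZMod 2)) (v : V) :
    iasCol A (v, 1) = fun w => A w v := by
  funext w; simp [iasCol]

private lemma col_two (A : Matrix V V (ZMod 2)) (v : V) :
    iasCol A (v, 2) = fun w => A w v + if w = v then (1:ZMod 2) else 0 := by
  funext w; simp [iasCol]

private lemma rank_univ (A : Matrix V V (ZMod 2)) :
    iasRank A Set.univ = Fintype.card V := by
  have h : Submodule.span (ZMod 2) (iasCol A '' Set.univ) = ⊤ := by
    apply span_top'
    intro v
    rw [← col_zero A v]
    exact Submodule.subset_span ⟨(v, 0), trivial, rfl⟩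
  rw [iasRank, h, finrank_top, Module.finrank_fintype_fun_eq_card]

private lemma iasRank_le_card (A : Matrix V V (ZMod 2)) (S : Set (V × Fin 3)) :
    iasRank A S ≤ Fintype.card V := by
  rw [iasRank, ← Module.finrank_fintype_fun_eq_card (R := ZMod 2) (η := V)]
  exact Submodule.finrank_le _

private lemma rank_le_ncard (A : Matrix V V (ZMod 2)) (S : Set (V × Fin 3)) :
    iasRank A S ≤ S.ncard := by
  classical
  haveI : Fintype ↥(iasCol A '' S) := Fintype.ofFinite _
  refine le_trans (finrank_span_le_card _) ?_
  rw [← Set.ncard_eq_toFinset_card']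
  exact Set.ncard_image_le (Set.toFinite _)

private lemma compl_ncard (S : Set (V × Fin 3)) :
    S.ncard + Sᶜ.ncard = 3 * Fintype.card V := by
  rw [Set.ncard_add_ncard_compl, Nat.card_eq_fintype_card, Fintype.card_prod,
    Fintype.card_fin, mul_comm]

private lemma tau_le_of_sep (A : Matrix V V (ZMod 2)) {k : ℕ} {T : Set (V × Fin 3)}
    (h : OrdinarySep A k T) : iasTau A ≤ (k : ℕ∞) :=
  sInf_le ⟨k, rfl, T, h⟩

private lemma no_loop (A : Matrix V V (ZMod 2)) (h3 : 3 ≤ iasTau A)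
    {p : V × Fin 3} (hp : iasCol A p = 0) : False := by
  have hn : 1 ≤ Fintype.card V := Fintype.card_pos_iff.2 ⟨p.1⟩
  have hg := compl_ncard ({p} : Set (V × Fin 3))
  have hs1 : ({p} : Set (V × Fin 3)).ncard = 1 := Set.ncard_singleton p
  have h1 : iasRank A {p} = 0 := by
    rw [iasRank, Set.image_singleton, hp, Submodule.span_zero_singleton, finrank_bot]
  have h2 := iasRank_le_card A ({p}ᶜ : Set (V × Fin 3))
  have hu := rank_univ A
  have hsep : OrdinarySep A 1 {p} := by
    refine ⟨one_pos, ?_, by omega, by omega⟩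
    unfold iasLambda; omega
  have hle := le_trans h3 (tau_le_of_sep A hsep)
  norm_num at hle

private lemma no_parallel (A : Matrix V V (ZMod 2)) (h3 : 3 ≤ iasTau A)
    (hn2 : 2 ≤ Fintype.card V) {p q : V × Fin 3} (hpq : p ≠ q)
    (hc : iasCol A p = iasCol A q) : False := by
  have hg := compl_ncard ({p, q} : Set (V × Fin 3))
  have hs2 : ({p, q} : Set (V × Fin 3)).ncard = 2 := Set.ncard_pair hpq
  have h1 : iasRank A {p, q} ≤ 1 := by
    rw [iasRank]
    have himg : iasCol A '' {p, q} = {iasCol A q} := by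
      rw [Set.image_pair, hc, Set.pair_eq_singleton]
    rw [himg]
    refine le_trans (finrank_span_le_card _) (by simp)
  have h2 := iasRank_le_card A ({p, q}ᶜ : Set (V × Fin 3))
  have hu := rank_univ A
  have hsep : OrdinarySep A 2 {p, q} := by
    refine ⟨two_pos, ?_, by omega, by omega⟩
    unfold iasLambda; omega
  have hle := le_trans h3 (tau_le_of_sep A hsep)
  norm_num at hle

private lemma low_rank_pair (A : Matrix V V (ZMod 2)) {S : Set (V × Fin 3)}
    (h4 : 4 ≤ S.ncard) (hr : iasRank A S ≤ 2) :
    (∃ p ∈ S, iasCol A p = 0) ∨ ∃ p ∈ S, ∃ q ∈ S, p ≠ q ∧ iasCol A p = iasCol A q := by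
  classical
  by_contra hcon
  push_neg at hcon
  obtain ⟨h0, hinj⟩ := hcon
  set U := Submodule.span (ZMod 2) (iasCol A '' S) with hUdef
  haveI : Fintype ↥U := Fintype.ofFinite _
  have hcard : Fintype.card ↥U = 2 ^ Module.finrank (ZMod 2) ↥U := by
    have := Module.card_eq_pow_finrank (K := ZMod 2) (V := ↥U)
    simpa using this
  have hc4 : Fintype.card ↥U ≤ 4 := by
    rw [hcard]
    calc (2:ℕ) ^ Module.finrank (ZMod 2) ↥U ≤ 2 ^ 2 :=
          Nat.pow_le_pow_right (by norm_num) hr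
      _ = 4 := by norm_num
  set T : Set (V → ZMod 2) := insert 0 (iasCol A '' S) with hTdef
  have hTsub : T ⊆ (U : Set (V → ZMod 2)) := by
    intro x hx
    rcases hx with rfl | hx
    · exact U.zero_mem
    · exact Submodule.subset_span hx
  have h0notin : (0 : V → ZMod 2) ∉ iasCol A '' S := by
    rintro ⟨p, hp, hp0⟩
    exact h0 p hp hp0
  have hTcard : T.ncard = S.ncard + 1 := by
    rw [hTdef, Set.ncard_insert_of_notMem h0notin (Set.toFinite _),
      Set.ncard_image_of_injOn fun p hp q hq hne => by
        by_contra hne'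
        exact hinj p hp q hq hne' hne]
  have hle : T.ncard ≤ (U : Set (V → ZMod 2)).ncard := Set.ncard_le_ncard hTsub (Set.toFinite _)
  have hUncard : (U : Set (V → ZMod 2)).ncard = Fintype.card ↥U := by
    rw [← Nat.card_coe_set_eq, Nat.card_eq_fintype_card]
    exact Fintype.card_congr (Equiv.refl _)
  omega

private lemma zAll : ∀ x y z : ZMod 2, x + y + z = 0 →
    z = x + y ∧ y = x + z ∧ x = y + z := by decide

private lemma col_sum (A : Matrix V V (ZMod 2)) (v : V) :
    iasCol A (v, 0) + iasCol A (v, 1) + iasCol A (v, 2) = 0 := by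
  funext w
  rw [col_zero, col_one, col_two]
  simp only [Pi.add_apply, Pi.zero_apply]
  by_cases hw : w = v
  · subst hw; rcases zmod2 (A w w) with h | h <;> rw [if_pos rfl, h] <;> decide
  · rw [if_neg hw]; rcases zmod2 (A w v) with h | h <;> rw [h] <;> decide

private lemma triple_mem (A : Matrix V V (ZMod 2)) {T : Set (V × Fin 3)} {v : V}
    {i j : Fin 3} (hij : i ≠ j) (hi : (v, i) ∈ T) (hj : (v, j) ∈ T) (l : Fin 3) :
    iasCol A (v, l) ∈ Submodule.span (ZMod 2) (iasCol A '' T) := by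
  have mi : iasCol A (v, i) ∈ Submodule.span (ZMod 2) (iasCol A '' T) :=
    Submodule.subset_span ⟨(v, i), hi, rfl⟩
  have mj : iasCol A (v, j) ∈ Submodule.span (ZMod 2) (iasCol A '' T) :=
    Submodule.subset_span ⟨(v, j), hj, rfl⟩
  have hsum := col_sum A v
  by_cases hli : l = i
  · rw [hli]; exact mi
  by_cases hlj : l = j
  · rw [hlj]; exact mj
  have key : iasCol A (v, l) = iasCol A (v, i) + iasCol A (v, j) := by
    have hz := fun w => zAll _ _ _ (by simpa using congrFun hsum w)
    fin_cases i <;> fin_cases j <;> fin_cases l <;> simp_all <;>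
      funext w <;>
      first
        | exact (hz w).1
        | exact (hz w).2.1
        | exact (hz w).2.2
        | (rw [(hz w).1]; exact add_comm _ _)
        | (rw [(hz w).2.1]; exact add_comm _ _)
        | (rw [(hz w).2.2]; exact add_comm _ _)
  rw [key]; exact add_mem mi mj

private lemma restrict_mem {U : Submodule (ZMod 2) (V → ZMod 2)} (P : V → Prop)
    [DecidablePred P]
    (he : ∀ v, ¬ P v → (fun w => if w = v then (1:ZMod 2) else 0) ∈ U)
    {y : V → ZMod 2} (hy : y ∈ U) :
    (fun w => if P w then y w else 0) ∈ U := by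
  classical
  have hs : (fun w => if P w then y w else 0)
      = y - ∑ v ∈ Finset.univ.filter (fun v => ¬ P v),
          y v • (fun w => if w = v then (1:ZMod 2) else 0) := by
    funext w
    rw [Pi.sub_apply, Finset.sum_apply]
    simp only [Pi.smul_apply, smul_eq_mul, mul_ite, mul_one, mul_zero]
    rw [Finset.sum_ite_eq (Finset.univ.filter fun v => ¬ P v) w y]
    by_cases h : P w <;> simp [h]
  rw [hs]
  exact sub_mem hy (Submodule.sum_mem _ fun v hv =>
    Submodule.smul_mem _ _ (he v (by simpa using hv)))

private lemma zsolve1 : ∀ x y : ZMod 2, x + y = 0 → x = y := by decide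
private lemma zsolve2 : ∀ x y : ZMod 2, x + y = 1 → x + 1 = y := by decide

private lemma trap_single (A : Matrix V V (ZMod 2)) (hA : A.IsSymm)
    (h3 : 3 ≤ iasTau A) (hn2 : 2 ≤ Fintype.card V) {b c : V} (hbc : b ≠ c)
    (hall : ∀ u, u ≠ b → u ≠ c → A c u = 0) : False := by
  have hoff : ∀ w, w ≠ b → w ≠ c → A w c = 0 := fun w h1 h2 => by
    rw [hA.apply]; exact hall w h1 h2
  rcases zmod2 (A b c) with h1 | h1 <;> rcases zmod2 (A c c) with h2 | h2
  · -- χ(c) = 0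
    apply no_loop A h3 (p := (c, 1))
    funext w
    rw [col_one]
    by_cases hw : w = c
    · subst hw; simpa using h2
    · by_cases hwb : w = b
      · subst hwb; simpa using h1
      · simpa using hoff w hwb hw
  · -- χ(c) = φ(c)
    apply no_parallel A h3 hn2 (p := (c, 1)) (q := (c, 0)) (by simp)
    rw [col_one, col_zero]
    funext w
    by_cases hw : w = c
    · subst hw; simpa using h2
    · rw [if_neg hw]
      by_cases hwb : w = b
      · subst hwb; simpa using h1
      · simpa using hoff w hwb hw
  · -- χ(c) = φ(b)
    apply no_parallel A h3 hn2 (p := (c, 1)) (q := (b, 0)) (by simp [hbc.symm])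
    rw [col_one, col_zero]
    funext w
    by_cases hwb : w = b
    · subst hwb; rw [if_pos rfl]; exact h1
    · rw [if_neg hwb]
      by_cases hw : w = c
      · subst hw; exact h2
      · exact hoff w hwb hw
  · -- ψ(c) = φ(b)
    apply no_parallel A h3 hn2 (p := (c, 2)) (q := (b, 0)) (by simp [hbc.symm])
    rw [col_two, col_zero]
    funext w
    by_cases hwb : w = b
    · subst hwb
      rw [if_pos rfl, if_neg hbc]
      simpa using h1
    · rw [if_neg hwb]
      by_cases hw : w = c
      · subst hw; rw [if_pos rfl, h2]; decide
      · rw [if_neg hw, hoff w hwb hw]; decide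

private lemma zsolve3 : ∀ x y : ZMod 2, x + y = 1 → x = y + 1 := by decide

private lemma trap_equal (A : Matrix V V (ZMod 2)) (hA : A.IsSymm)
    (h3 : 3 ≤ iasTau A) (hn2 : 2 ≤ Fintype.card V) {b c : V} (hbc : b ≠ c)
    (hall : ∀ u, u ≠ b → u ≠ c → A b u = A c u) : False := by
  have hoff : ∀ w, w ≠ b → w ≠ c → A w b = A w c := fun w h1 h2 => by
    rw [← hA.apply w b, ← hA.apply w c]; exact hall w h1 h2
  rcases zmod2 (A b b + A b c) with h1 | h1 <;> rcases zmod2 (A c b + A c c) with h2 | h2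
  · -- χ(b) = χ(c)
    apply no_parallel A h3 hn2 (p := (b, 1)) (q := (c, 1)) (by simp [hbc])
    rw [col_one, col_one]
    funext w
    by_cases hwb : w = b
    · subst hwb; exact zsolve1 _ _ h1
    · by_cases hwc : w = c
      · subst hwc; exact zsolve1 _ _ h2
      · exact hoff w hwb hwc
  · -- χ(b) = ψ(c)
    apply no_parallel A h3 hn2 (p := (b, 1)) (q := (c, 2)) (by simp [hbc])
    rw [col_one, col_two]
    funext w
    by_cases hwb : w = b
    · subst hwb; rw [if_neg hbc, add_zero]; exact zsolve1 _ _ h1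
    · by_cases hwc : w = c
      · subst hwc; rw [if_pos rfl]; exact zsolve3 _ _ h2
      · rw [if_neg hwc, add_zero]; exact hoff w hwb hwc
  · -- ψ(b) = χ(c)
    apply no_parallel A h3 hn2 (p := (b, 2)) (q := (c, 1)) (by simp [hbc])
    rw [col_two, col_one]
    funext w
    by_cases hwb : w = b
    · subst hwb; rw [if_pos rfl]; exact zsolve2 _ _ h1
    · by_cases hwc : w = c
      · subst hwc; rw [if_neg (Ne.symm hbc), add_zero]; exact zsolve1 _ _ h2
      · rw [if_neg hwb, add_zero]; exact hoff w hwb hwc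
  · -- ψ(b) = ψ(c)
    apply no_parallel A h3 hn2 (p := (b, 2)) (q := (c, 2)) (by simp [hbc])
    rw [col_two, col_two]
    funext w
    by_cases hwb : w = b
    · subst hwb; rw [if_pos rfl, if_neg hbc, add_zero]; exact zsolve2 _ _ h1
    · by_cases hwc : w = c
      · subst hwc; rw [if_pos rfl, if_neg (Ne.symm hbc), add_zero]; exact zsolve3 _ _ h2
      · rw [if_neg hwb, if_neg hwc, hoff w hwb hwc]

private lemma zswap : ∀ x y : ZMod 2, x * y + y * x = 0 := by decide

private lemma six_le (A : Matrix V V (ZMod 2)) (hA : A.IsSymm) (h3 : 3 ≤ iasTau A)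
    (S : Set (V × Fin 3)) (hr : 3 ≤ iasRank A S)
    (hl : iasRank A S + iasRank A Sᶜ ≤ Fintype.card V + 2) : 6 ≤ S.ncard := by
  classical
  by_contra h6
  push_neg at h6
  have h5 : S.ncard ≤ 5 := by omega
  have hn3 : 3 ≤ Fintype.card V := le_trans hr (iasRank_le_card A S)
  have hn2 : 2 ≤ Fintype.card V := by omega
  set U := Submodule.span (ZMod 2) (iasCol A '' Sᶜ) with hUdef
  set P : V → Prop := fun v => ((v,0) ∈ S ∧ (v,1) ∈ S) ∨ ((v,0) ∈ S ∧ (v,2) ∈ S) ∨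
    ((v,1) ∈ S ∧ (v,2) ∈ S) with hPdef
  have hgood : ∀ v, ¬ P v → ∀ l, iasCol A (v,l) ∈ U := by
    intro v hv l
    rw [hPdef] at hv
    by_cases h0 : (v,0) ∈ S
    · have ha : (v,1) ∉ S := fun h => hv (Or.inl ⟨h0, h⟩)
      have hb : (v,2) ∉ S := fun h => hv (Or.inr (Or.inl ⟨h0, h⟩))
      exact triple_mem A (i := 1) (j := 2) (by decide) ha hb l
    · by_cases h1 : (v,1) ∈ S
      · have hb : (v,2) ∉ S := fun h => hv (Or.inr (Or.inr ⟨h1, h⟩))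
        exact triple_mem A (i := 0) (j := 2) (by decide) h0 hb l
      · exact triple_mem A (i := 0) (j := 1) (by decide) h0 h1 l
  have he : ∀ v, ¬ P v → (fun w => if w = v then (1:ZMod 2) else 0) ∈ U := by
    intro v hv
    have h := hgood v hv 0
    rwa [col_zero] at h
  have hchi : ∀ v, ¬ P v → (fun w => A w v) ∈ U := by
    intro v hv
    have h := hgood v hv 1
    rwa [col_one] at h
  have htop : (∀ v, P v → (fun w => if w = v then (1:ZMod 2) else 0) ∈ U) → False := by
    intro hPe
    have hU : U = ⊤ := span_top' (fun v => by
      by_cases h : P v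
      · exact hPe v h
      · exact he v h)
    have hrc : iasRank A Sᶜ = Fintype.card V := by
      rw [iasRank, ← hUdef, hU, finrank_top, Module.finrank_fintype_fun_eq_card]
    omega
  set Bf : Finset V := Finset.univ.filter P with hBf
  have hBmem : ∀ v, v ∈ Bf ↔ P v := by intro v; simp [hBf]
  have hBcard : Bf.card ≤ 2 := by
    by_contra hB
    push_neg at hB
    have hfib : ∀ b ∈ Bf,
        2 ≤ ((S.toFinset.filter (fun p => P p.1)).filter (fun p => p.1 = b)).card := by
      intro b hb
      have hPb : P b := (hBmem b).1 hb
      have two_mem : ∀ i : Fin 3, (b, i) ∈ S →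
          (b, i) ∈ (S.toFinset.filter (fun p => P p.1)).filter (fun p => p.1 = b) := by
        intro i hi
        simp [Set.mem_toFinset, hi, hPb]
      rcases hPb with ⟨ha, hb'⟩ | ⟨ha, hb'⟩ | ⟨ha, hb'⟩
      · exact Finset.one_lt_card.2 ⟨_, two_mem 0 ha, _, two_mem 1 hb', by simp⟩
      · exact Finset.one_lt_card.2 ⟨_, two_mem 0 ha, _, two_mem 2 hb', by simp⟩
      · exact Finset.one_lt_card.2 ⟨_, two_mem 1 ha, _, two_mem 2 hb', by simp⟩
    have hsum := Finset.card_eq_sum_card_fiberwise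
      (f := fun p : V × Fin 3 => p.1) (s := S.toFinset.filter (fun p => P p.1)) (t := Bf)
      (fun x hx => by
        rw [Finset.mem_coe, hBmem]
        exact (Finset.mem_filter.1 (Finset.mem_coe.1 hx)).2)
    have hge : 2 * Bf.card ≤ (S.toFinset.filter (fun p => P p.1)).card := by
      rw [hsum]
      calc 2 * Bf.card = ∑ _b ∈ Bf, 2 := by rw [Finset.sum_const, smul_eq_mul, mul_comm]
        _ ≤ _ := Finset.sum_le_sum hfib
    have hcard_le : (S.toFinset.filter (fun p => P p.1)).card ≤ S.ncard := by
      rw [Set.ncard_eq_toFinset_card']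
      exact Finset.card_le_card (Finset.filter_subset _ _)
    omega
  have hcc : Bf.card = 0 ∨ Bf.card = 1 ∨ Bf.card = 2 := by omega
  rcases hcc with hc0 | hc1 | hc2
  · have hBe : Bf = ∅ := Finset.card_eq_zero.1 hc0
    exact htop fun v hv => absurd ((hBmem v).2 hv)
      (by rw [hBe]; exact Finset.notMem_empty v)
  · obtain ⟨b, hb⟩ := Finset.card_eq_one.1 hc1
    have hPb : ∀ v, P v ↔ v = b := by
      intro v; rw [← hBmem, hb, Finset.mem_singleton]
    by_cases hex : ∃ u, u ≠ b ∧ A b u = 1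
    · obtain ⟨u, hub, hAbu⟩ := hex
      apply htop
      intro v hv
      have hvb : v = b := (hPb v).1 hv
      rw [hvb]
      have hu' : ¬ P u := fun h => hub ((hPb u).1 h)
      have hz := restrict_mem (U := U) (fun w => w = b)
        (fun w hw => he w (fun hPw => hw ((hPb w).1 hPw))) (hchi u hu')
      have heq : (fun w => if w = b then A w u else 0)
          = (fun w => if w = b then (1:ZMod 2) else 0) := by
        funext w
        by_cases h : w = b
        · rw [if_pos h, if_pos h, h, hAbu]
        · rw [if_neg h, if_neg h]
      rwa [heq] at hz
    · push_neg at hex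
      have hall : ∀ u, u ≠ b → A b u = 0 := by
        intro u hu
        rcases zmod2 (A b u) with h | h
        · exact h
        · exact absurd h (hex u hu)
      obtain ⟨b', hb'⟩ := Fintype.exists_ne_of_one_lt_card (by omega) b
      exact trap_single A hA h3 hn2 hb' (fun u hu1 hu2 => hall u hu2)
  · obtain ⟨b₁, b₂, hne, hb⟩ := Finset.card_eq_two.1 hc2
    have hPb : ∀ v, P v ↔ (v = b₁ ∨ v = b₂) := by
      intro v; rw [← hBmem, hb]; simp
    have heQ : ∀ v, ¬ (v = b₁ ∨ v = b₂) →
        (fun w => if w = v then (1:ZMod 2) else 0) ∈ U :=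
      fun v h => he v (fun hPv => h ((hPb v).1 hPv))
    have hzz : ∀ u, ¬ (u = b₁ ∨ u = b₂) →
        (fun w => if w = b₁ ∨ w = b₂ then A w u else 0) ∈ U := by
      intro u hu
      exact restrict_mem (U := U) (fun w => w = b₁ ∨ w = b₂) heQ
        (hchi u (fun h => hu ((hPb u).1 h)))
    by_cases hex : ∃ u₁, ¬ (u₁ = b₁ ∨ u₁ = b₂) ∧ ∃ u₂, ¬ (u₂ = b₁ ∨ u₂ = b₂) ∧
        A b₁ u₁ * A b₂ u₂ + A b₁ u₂ * A b₂ u₁ = 1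
    · obtain ⟨u₁, hu₁, u₂, hu₂, hdet⟩ := hex
      apply htop
      intro v hv
      have hz₁ := hzz u₁ hu₁
      have hz₂ := hzz u₂ hu₂
      rcases (hPb v).1 hv with hv1 | hv1 <;> rw [hv1]
      · have heq : A b₂ u₂ • (fun w => if w = b₁ ∨ w = b₂ then A w u₁ else 0)
            + A b₂ u₁ • (fun w => if w = b₁ ∨ w = b₂ then A w u₂ else 0)
            = (fun w => if w = b₁ then (1:ZMod 2) else 0) := by
          funext w
          simp only [Pi.add_apply, Pi.smul_apply, smul_eq_mul]
          by_cases h1 : w = b₁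
          · rw [if_pos (Or.inl h1), if_pos (Or.inl h1), if_pos h1, h1]
            linear_combination hdet
          · by_cases h2 : w = b₂
            · rw [if_pos (Or.inr h2), if_pos (Or.inr h2), if_neg h1, h2]
              exact zswap (A b₂ u₂) (A b₂ u₁)
            · have hQw : ¬ (w = b₁ ∨ w = b₂) := fun h => h.elim h1 h2
              rw [if_neg hQw, if_neg hQw, if_neg h1, mul_zero, mul_zero, add_zero]
        rw [← heq]
        exact add_mem (Submodule.smul_mem _ _ hz₁) (Submodule.smul_mem _ _ hz₂)
      · have heq : A b₁ u₂ • (fun w => if w = b₁ ∨ w = b₂ then A w u₁ else 0)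
            + A b₁ u₁ • (fun w => if w = b₁ ∨ w = b₂ then A w u₂ else 0)
            = (fun w => if w = b₂ then (1:ZMod 2) else 0) := by
          funext w
          simp only [Pi.add_apply, Pi.smul_apply, smul_eq_mul]
          by_cases h1 : w = b₁
          · have h2 : ¬ w = b₂ := fun h => hne (h1 ▸ h ▸ rfl)
            rw [if_pos (Or.inl h1), if_pos (Or.inl h1), if_neg h2, h1]
            exact zswap (A b₁ u₂) (A b₁ u₁)
          · by_cases h2 : w = b₂
            · rw [if_pos (Or.inr h2), if_pos (Or.inr h2), if_pos h2, h2]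
              linear_combination hdet
            · have hQw : ¬ (w = b₁ ∨ w = b₂) := fun h => h.elim h1 h2
              rw [if_neg hQw, if_neg hQw, if_neg h2, mul_zero, mul_zero, add_zero]
        rw [← heq]
        exact add_mem (Submodule.smul_mem _ _ hz₁) (Submodule.smul_mem _ _ hz₂)
    · push_neg at hex
      have hdet0 : ∀ u₁ u₂, ¬ (u₁ = b₁ ∨ u₁ = b₂) → ¬ (u₂ = b₁ ∨ u₂ = b₂) →
          A b₁ u₁ * A b₂ u₂ + A b₁ u₂ * A b₂ u₁ = 0 := by
        intro u₁ u₂ h1 h2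
        rcases zmod2 (A b₁ u₁ * A b₂ u₂ + A b₁ u₂ * A b₂ u₁) with h | h
        · exact h
        · exact absurd h (hex u₁ (not_or.mp h1) u₂ (not_or.mp h2))
      by_cases hx1 : ∃ u, ¬ (u = b₁ ∨ u = b₂) ∧ A b₁ u = 1 ∧ A b₂ u = 0
      · obtain ⟨u₀, hu₀, ha1, ha2⟩ := hx1
        have hall : ∀ u, u ≠ b₁ → u ≠ b₂ → A b₂ u = 0 := by
          intro u h1 h2
          have hQu : ¬ (u = b₁ ∨ u = b₂) := fun h => h.elim h1 h2
          have hd := hdet0 u₀ u hu₀ hQu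
          rw [ha1, ha2, one_mul, mul_zero, add_zero] at hd
          exact hd
        exact trap_single A hA h3 hn2 hne hall
      · by_cases hx2 : ∃ u, ¬ (u = b₁ ∨ u = b₂) ∧ A b₁ u = 0 ∧ A b₂ u = 1
        · obtain ⟨u₀, hu₀, ha1, ha2⟩ := hx2
          have hall : ∀ u, u ≠ b₂ → u ≠ b₁ → A b₁ u = 0 := by
            intro u h2 h1
            have hQu : ¬ (u = b₁ ∨ u = b₂) := fun h => h.elim h1 h2
            have hd := hdet0 u₀ u hu₀ hQu
            rw [ha1, ha2, zero_mul, zero_add, mul_one] at hd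
            exact hd
          exact trap_single A hA h3 hn2 (Ne.symm hne) hall
        · push_neg at hx1 hx2
          have hall : ∀ u, u ≠ b₁ → u ≠ b₂ → A b₁ u = A b₂ u := by
            intro u h1 h2
            have hQu : ¬ (u = b₁ ∨ u = b₂) := fun h => h.elim h1 h2
            rcases zmod2 (A b₁ u) with ha | ha <;> rcases zmod2 (A b₂ u) with hb' | hb'
            · rw [ha, hb']
            · exact absurd hb' (hx2 u ⟨h1, h2⟩ ha)
            · exact absurd hb' (hx1 u ⟨h1, h2⟩ ha)
            · rw [ha, hb']
          exact trap_equal A hA h3 hn2 hne hall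

theorem stmt14 (A : Matrix V V (ZMod 2)) (hA : A.IsSymm) (h3 : 3 ≤ iasTau A) :
    {S : Set (V × Fin 3) | OrdinarySep A 3 S ∧ 6 ≤ S.ncard ∧ 6 ≤ Sᶜ.ncard} =
      {S : Set (V × Fin 3) | OrdinarySep A 3 S ∧ 4 ≤ S.ncard ∧ 4 ≤ Sᶜ.ncard} ∧
    {S : Set (V × Fin 3) | OrdinarySep A 3 S ∧ 4 ≤ S.ncard ∧ 4 ≤ Sᶜ.ncard} =
      {S : Set (V × Fin 3) | VerticalSep A 3 S} := by
  classical
  have hu := rank_univ A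
  have hL1 : ∀ S : Set (V × Fin 3), OrdinarySep A 3 S → 4 ≤ S.ncard → 4 ≤ Sᶜ.ncard →
      VerticalSep A 3 S := by
    intro S hS h4 h4c
    have hg := compl_ncard S
    have hn3 : 3 ≤ Fintype.card V := by omega
    have hrk : ∀ T : Set (V × Fin 3), 4 ≤ T.ncard → 3 ≤ iasRank A T := by
      intro T hT
      by_contra h
      push_neg at h
      rcases low_rank_pair A hT (by omega) with ⟨p, _, hp⟩ | ⟨p, _, q, _, hpq, hc⟩
      · exact no_loop A h3 hp
      · exact no_parallel A h3 (by omega) hpq hc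
    exact ⟨by norm_num, hS.2.1, hrk S h4, hrk Sᶜ h4c⟩
  have hL2 : ∀ S : Set (V × Fin 3), VerticalSep A 3 S →
      OrdinarySep A 3 S ∧ 6 ≤ S.ncard ∧ 6 ≤ Sᶜ.ncard := by
    intro S hS
    obtain ⟨-, hlam, hrS, hrSc⟩ := hS
    have hlam' : iasRank A S + iasRank A Sᶜ ≤ Fintype.card V + 2 := by
      have h := hlam
      unfold iasLambda at h
      omega
    have h6 : 6 ≤ S.ncard := six_le A hA h3 S hrS hlam'
    have h6c : 6 ≤ Sᶜ.ncard := by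
      refine six_le A hA h3 Sᶜ hrSc ?_
      rw [compl_compl]
      omega
    exact ⟨⟨by norm_num, hlam, by omega, by omega⟩, h6, h6c⟩
  constructor
  · ext S
    simp only [Set.mem_setOf_eq]
    constructor
    · rintro ⟨h, h6, h6c⟩
      exact ⟨h, by omega, by omega⟩
    · rintro ⟨h, h4, h4c⟩
      obtain ⟨h', h6, h6c⟩ := hL2 S (hL1 S h h4 h4c)
      exact ⟨h, h6, h6c⟩
  · ext S
    simp only [Set.mem_setOf_eq]
    constructor
    · rintro ⟨h, h4, h4c⟩
      exact hL1 S h h4 h4c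
    · intro hv
      obtain ⟨h', h6, h6c⟩ := hL2 S hv
      exact ⟨h', by omega, by omega⟩
end

section
/- Let G be a graph. Then the following properties of a subset X ⊆ V are equivalent: (1) the rank of τ_G(X) in M[IAS(G)] is ≥ 2·|X|; (2) the rank of τ_G(X) in M[IAS(G)] equals 2·|X|; (3) no transverse circuit of M[IAS(G)] is contained in τ_G(X). -/
open scoped ENat

variable {V : Type*} [Fintype V] [DecidableEq V]

section AuxStmt17

variable {V : Type*} [Fintype V] [DecidableEq V]

open Finset Submodule

/-- `ψ(v) = φ(v) + χ(v)`. -/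
lemma iasCol_two_eq (A : Matrix V V (ZMod 2)) (v : V) :
    iasCol A (v, 2) = iasCol A (v, 0) + iasCol A (v, 1) := by
  funext w
  simp only [iasCol, Pi.add_apply]
  norm_num
  rw [if_neg (by decide : ¬ (2 : Fin 3) = 0), if_neg (by decide : ¬ (2 : Fin 3) = 1)]
  exact add_comm _ _

/-- The family of `(φ(v), χ(v))` columns for `v ∈ X`. -/
noncomputable def iasPairCol (A : Matrix V V (ZMod 2)) (X : Set V) :
    ↥X × Fin 2 → V → ZMod 2 :=
  fun t => iasCol A (t.1.1, ⟨t.2.1, by omega⟩)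

lemma zmod2_ne_zero {a : ZMod 2} (h : a ≠ 0) : a = 1 := by revert h; revert a; decide

/-- Dependence of a set in the isotropic matroid is witnessed by a nonempty
finite subset whose columns sum to zero. -/
lemma not_iasIndep_iff (A : Matrix V V (ZMod 2)) (S : Set (V × Fin 3)) :
    ¬ iasIndep A S ↔
      ∃ T : Finset (V × Fin 3), ↑T ⊆ S ∧ T.Nonempty ∧ ∑ p ∈ T, iasCol A p = 0 := by
  classical
  rw [iasIndep, Fintype.not_linearIndependent_iff]
  constructor
  · rintro ⟨g, hsum, i, hi⟩
    refine ⟨(Finset.univ.filter (fun j : S => g j ≠ 0)).image Subtype.val, ?_, ?_, ?_⟩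
    · intro p hp
      simp only [Finset.coe_image, Set.mem_image] at hp
      obtain ⟨j, _, rfl⟩ := hp
      exact j.2
    · exact ⟨i.1, Finset.mem_image.2 ⟨i, by simpa using hi, rfl⟩⟩
    · rw [Finset.sum_image (fun a _ b _ h => Subtype.val_injective h)]
      rw [← hsum]
      rw [Finset.sum_filter]
      apply Finset.sum_congr rfl
      intro j _
      by_cases hg : g j = 0
      · simp [hg]
      · simp [hg, zmod2_ne_zero hg]
  · rintro ⟨T, hTS, ⟨p0, hp0⟩, hsum⟩
    refine ⟨fun j => if j.1 ∈ T then 1 else 0, ?_, ⟨p0, hTS hp0⟩, by simp [hp0]⟩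
    have h1 : ∑ j : S, (if j.1 ∈ T then (1 : ZMod 2) else 0) • iasCol A j.1
        = ∑ j : S, (if j.1 ∈ T then iasCol A j.1 else 0) := by
      apply Finset.sum_congr rfl
      intro j _
      by_cases hj : j.1 ∈ T <;> simp [hj]
    rw [h1]
    have h2 : ∑ j : S, (if j.1 ∈ T then iasCol A j.1 else 0)
        = ∑ p ∈ S.toFinset, (if p ∈ T then iasCol A p else 0) := by
      rw [Finset.sum_subtype S.toFinset (fun x => Set.mem_toFinset)]
    rw [h2, Finset.sum_ite_mem, Finset.inter_eq_right.2 (fun p hp => Set.mem_toFinset.2 (hTS hp)),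
      hsum]

/-- If the pair-column family is dependent, there is a dependent transversal
finset inside `τ(X)`. -/
lemma exists_transversal_dep (A : Matrix V V (ZMod 2)) {X : Set V}
    (h : ¬ LinearIndependent (ZMod 2) (iasPairCol A X)) :
    ∃ C : Finset (V × Fin 3), ↑C ⊆ tauSet X ∧ (∀ p ∈ C, ∀ q ∈ C, p.1 = q.1 → p = q)
      ∧ C.Nonempty ∧ ∑ p ∈ C, iasCol A p = 0 := by
  classical
  rw [Fintype.not_linearIndependent_iff] at h
  obtain ⟨g, hsum, t0, ht0⟩ := h
  set T : Finset (↥X × Fin 2) := Finset.univ.filter (fun t => g t ≠ 0) with hT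
  have hsumT : ∑ t ∈ T, iasPairCol A X t = 0 := by
    rw [← hsum, Finset.sum_filter]
    apply Finset.sum_congr rfl
    intro t _
    by_cases hg : g t = 0
    · simp [hg]
    · simp [hg, zmod2_ne_zero hg]
  set pick : ↥X → V × Fin 3 :=
    fun v => (v.1, if (v, 0) ∈ T then (if (v, 1) ∈ T then 2 else 0) else 1) with hpick
  set D : Finset ↥X := Finset.univ.filter (fun v => (v, 0) ∈ T ∨ (v, 1) ∈ T) with hD
  have hpickfst : ∀ v, (pick v).1 = v.1 := fun v => rfl
  have hpickinj : ∀ a ∈ D, ∀ b ∈ D, pick a = pick b → a = b := by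
    intro a _ b _ hab
    have : a.1 = b.1 := by rw [← hpickfst a, ← hpickfst b, hab]
    exact Subtype.ext this
  refine ⟨D.image pick, ?_, ?_, ?_, ?_⟩
  · intro p hp
    simp only [Finset.coe_image, Set.mem_image] at hp
    obtain ⟨v, _, rfl⟩ := hp
    exact v.2
  · intro p hp q hq hpq
    obtain ⟨v, _, rfl⟩ := Finset.mem_image.1 hp
    obtain ⟨w, _, rfl⟩ := Finset.mem_image.1 hq
    rw [hpickfst, hpickfst] at hpq
    rw [Subtype.ext hpq]
  · refine ⟨pick t0.1, Finset.mem_image.2 ⟨t0.1, ?_, rfl⟩⟩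
    have ht0T : t0 ∈ T := by simp [hT, ht0]
    rw [hD, Finset.mem_filter]
    refine ⟨Finset.mem_univ _, ?_⟩
    obtain ⟨v, j⟩ := t0
    fin_cases j
    · exact Or.inl ht0T
    · exact Or.inr ht0T
  · rw [Finset.sum_image hpickinj]
    have hterm : ∀ v ∈ D, iasCol A (pick v) =
        (if (v, 0) ∈ T then iasPairCol A X (v, 0) else 0)
          + (if (v, 1) ∈ T then iasPairCol A X (v, 1) else 0) := by
      intro v hv
      rw [hD, Finset.mem_filter] at hv
      by_cases h0 : (v, 0) ∈ T <;> by_cases h1 : (v, 1) ∈ T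
      · simp only [hpick, h0, h1, if_true, if_pos]
        rw [iasCol_two_eq]
        rfl
      · simp only [hpick, h0, h1, if_true, if_false]
        rw [add_zero]
        rfl
      · simp only [hpick, h0, h1, if_false, if_true]
        rw [zero_add]
        rfl
      · exact absurd hv.2 (by simp [h0, h1])
    rw [Finset.sum_congr rfl hterm]
    have hext : ∑ v ∈ D, ((if (v, 0) ∈ T then iasPairCol A X (v, 0) else 0)
          + (if (v, 1) ∈ T then iasPairCol A X (v, 1) else 0))
        = ∑ v : ↥X, ((if (v, 0) ∈ T then iasPairCol A X (v, 0) else 0)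
          + (if (v, 1) ∈ T then iasPairCol A X (v, 1) else 0)) := by
      apply Finset.sum_subset (Finset.subset_univ D)
      intro v _ hv
      rw [hD, Finset.mem_filter] at hv
      push_neg at hv
      have := hv (Finset.mem_univ v)
      simp [this.1, this.2]
    have key : ∑ v : ↥X, ((if (v, 0) ∈ T then iasPairCol A X (v, 0) else 0)
          + (if (v, 1) ∈ T then iasPairCol A X (v, 1) else 0))
        = ∑ t ∈ T, iasPairCol A X t := by
      have key2 : ∑ t ∈ T, iasPairCol A X t
          = ∑ t : ↥X × Fin 2, (if t ∈ T then iasPairCol A X t else 0) := by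
        rw [← Finset.sum_subset (Finset.subset_univ T) (fun x _ hx => if_neg hx)]
        exact Finset.sum_congr rfl (fun t ht => (if_pos ht).symm)
      rw [key2, Fintype.sum_prod_type]
      exact Finset.sum_congr rfl (fun v _ =>
        (Fin.sum_univ_two (f := fun j => if (v, j) ∈ T then iasPairCol A X (v, j) else 0)).symm)
    rw [hext, key, hsumT]

/-- A dependent transversal finset inside `τ(X)` makes the pair-column family
dependent. -/
lemma not_indep_of_transversal_dep (A : Matrix V V (ZMod 2)) {X : Set V}
    (C : Finset (V × Fin 3)) (hsub : ↑C ⊆ tauSet X)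
    (htr : ∀ p ∈ C, ∀ q ∈ C, p.1 = q.1 → p = q) (hne : C.Nonempty)
    (hsum : ∑ p ∈ C, iasCol A p = 0) :
    ¬ LinearIndependent (ZMod 2) (iasPairCol A X) := by
  classical
  rw [Fintype.not_linearIndependent_iff]
  set g : ↥X × Fin 2 → ZMod 2 :=
    fun t => if ((t.1.1, (⟨t.2.1, by omega⟩ : Fin 3)) ∈ C ∨ (t.1.1, (2 : Fin 3)) ∈ C)
      then 1 else 0 with hg
  refine ⟨g, ?_, ?_⟩
  · have hper : ∀ v : ↥X, g (v, 0) • iasPairCol A X (v, 0) + g (v, 1) • iasPairCol A X (v, 1)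
        = ∑ i : Fin 3, (if (v.1, i) ∈ C then iasCol A (v.1, i) else 0) := by
      intro v
      have hg0 : g (v, 0) = if ((v.1, (0 : Fin 3)) ∈ C ∨ (v.1, (2 : Fin 3)) ∈ C) then 1 else 0 := rfl
      have hg1 : g (v, 1) = if ((v.1, (1 : Fin 3)) ∈ C ∨ (v.1, (2 : Fin 3)) ∈ C) then 1 else 0 := rfl
      have hf0 : iasPairCol A X (v, 0) = iasCol A (v.1, 0) := rfl
      have hf1 : iasPairCol A X (v, 1) = iasCol A (v.1, 1) := rfl
      rw [hg0, hg1, hf0, hf1, Fin.sum_univ_three]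
      by_cases h0 : (v.1, (0 : Fin 3)) ∈ C <;> by_cases h1 : (v.1, (1 : Fin 3)) ∈ C
      · exact absurd (htr _ h0 _ h1 rfl) (by simp)
      · by_cases h2 : (v.1, (2 : Fin 3)) ∈ C
        · exact absurd (htr _ h0 _ h2 rfl) (by simp)
        · simp [h0, h1, h2]
      · by_cases h2 : (v.1, (2 : Fin 3)) ∈ C
        · exact absurd (htr _ h1 _ h2 rfl) (by simp)
        · simp [h0, h1, h2]
      · by_cases h2 : (v.1, (2 : Fin 3)) ∈ C
        · simp [h0, h1, h2, iasCol_two_eq]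
        · simp [h0, h1, h2]
    rw [Fintype.sum_prod_type]
    have : ∀ v : ↥X, ∑ j : Fin 2, g (v, j) • iasPairCol A X (v, j)
        = ∑ i : Fin 3, (if (v.1, i) ∈ C then iasCol A (v.1, i) else 0) := by
      intro v
      rw [Fin.sum_univ_two, hper]
    rw [Finset.sum_congr rfl (fun v _ => this v)]
    have hinj : Function.Injective (fun t : ↥X × Fin 3 => (t.1.1, t.2)) := by
      rintro ⟨a, i⟩ ⟨b, j⟩ h
      simp only [Prod.mk.injEq] at h
      exact Prod.ext (Subtype.ext h.1) h.2
    have hsum1 : ∑ v : ↥X, ∑ i : Fin 3, (if (v.1, i) ∈ C then iasCol A (v.1, i) else 0)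
        = ∑ t : ↥X × Fin 3, (if ((t.1.1, t.2) : V × Fin 3) ∈ C
            then iasCol A (t.1.1, t.2) else 0) := by
      rw [Fintype.sum_prod_type]
    rw [hsum1]
    have hsum2 : ∑ t : ↥X × Fin 3, (if ((t.1.1, t.2) : V × Fin 3) ∈ C
          then iasCol A (t.1.1, t.2) else 0)
        = ∑ p ∈ Finset.univ.image (fun t : ↥X × Fin 3 => (t.1.1, t.2)),
            (if p ∈ C then iasCol A p else 0) := by
      rw [Finset.sum_image (fun a _ b _ h => hinj h)]
    rw [hsum2]
    have hCsub : C ⊆ Finset.univ.image (fun t : ↥X × Fin 3 => (t.1.1, t.2)) := by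
      intro p hp
      have hx : p.1 ∈ X := hsub hp
      exact Finset.mem_image.2 ⟨(⟨p.1, hx⟩, p.2), Finset.mem_univ _, rfl⟩
    rw [← Finset.sum_subset hCsub (fun p _ hp => if_neg hp)]
    rw [← hsum]
    exact Finset.sum_congr rfl (fun p hp => if_pos hp)
  · obtain ⟨p, hp⟩ := hne
    obtain ⟨v, i⟩ := p
    have hx : v ∈ X := hsub hp
    have hgv0 : g (⟨v, hx⟩, 0) = if ((v, (0 : Fin 3)) ∈ C ∨ (v, (2 : Fin 3)) ∈ C)
        then 1 else 0 := rfl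
    have hgv1 : g (⟨v, hx⟩, 1) = if ((v, (1 : Fin 3)) ∈ C ∨ (v, (2 : Fin 3)) ∈ C)
        then 1 else 0 := rfl
    have hi : i = 0 ∨ i = 1 ∨ i = 2 := by fin_cases i <;> simp
    rcases hi with rfl | rfl | rfl
    · exact ⟨(⟨v, hx⟩, 0), by rw [hgv0, if_pos (Or.inl hp)]; exact one_ne_zero⟩
    · exact ⟨(⟨v, hx⟩, 1), by rw [hgv1, if_pos (Or.inl hp)]; exact one_ne_zero⟩
    · exact ⟨(⟨v, hx⟩, 0), by rw [hgv0, if_pos (Or.inr hp)]; exact one_ne_zero⟩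

/-- Any dependent finset contains a circuit. -/
lemma exists_circuit_subset (A : Matrix V V (ZMod 2)) (C : Finset (V × Fin 3))
    (h : ¬ iasIndep A ↑C) :
    ∃ D : Finset (V × Fin 3), ↑D ⊆ (↑C : Set (V × Fin 3)) ∧ iasCircuit A ↑D := by
  classical
  set P := C.powerset.filter (fun D : Finset (V × Fin 3) => ¬ iasIndep A ↑D) with hP
  have hPne : P.Nonempty := ⟨C, by simp [hP, h]⟩
  obtain ⟨D, hDP, hmin⟩ := P.exists_min_image Finset.card hPne
  rw [hP, Finset.mem_filter, Finset.mem_powerset] at hDP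
  refine ⟨D, by exact_mod_cast Finset.coe_subset.2 hDP.1, hDP.2, ?_⟩
  intro S hS
  by_contra hSdep
  set S' := D.filter (· ∈ S) with hS'
  have hS'coe : (↑S' : Set (V × Fin 3)) = S := by
    ext x
    simp only [hS', Finset.coe_filter, Set.mem_setOf_eq]
    exact ⟨fun hx => hx.2, fun hx => ⟨Finset.mem_coe.1 (hS.subset hx), hx⟩⟩
  have hS'ss : S' ⊂ D := by
    refine ⟨Finset.filter_subset _ _, fun hDS => ?_⟩
    have : (↑D : Set (V × Fin 3)) ⊆ ↑S' := Finset.coe_subset.2 hDS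
    rw [hS'coe] at this
    exact hS.not_subset this
  have hS'P : S' ∈ P := by
    rw [hP, Finset.mem_filter, Finset.mem_powerset]
    exact ⟨(Finset.filter_subset _ _).trans hDP.1, by rw [hS'coe]; exact hSdep⟩
  exact absurd (Finset.card_lt_card hS'ss) (not_lt.2 (hmin S' hS'P))

end AuxStmt17

theorem stmt17 (A : Matrix V V (ZMod 2)) (hA : A.IsSymm) (X : Set V) :
    List.TFAE [2 * X.ncard ≤ iasRank A (tauSet X),
      iasRank A (tauSet X) = 2 * X.ncard,
      ∀ C, IsTransverseCircuit A C → ¬ C ⊆ tauSet X] := by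
  classical
  have hcard : Fintype.card (↥X × Fin 2) = 2 * X.ncard := by
    rw [Fintype.card_prod, Fintype.card_fin, Set.ncard_eq_toFinset_card', Set.toFinset_card]
    ring
  have hspan : Submodule.span (ZMod 2) (Set.range (iasPairCol A X))
      = Submodule.span (ZMod 2) (iasCol A '' tauSet X) := by
    apply le_antisymm
    · rw [Submodule.span_le]
      rintro _ ⟨⟨v, j⟩, rfl⟩
      exact Submodule.subset_span ⟨(v.1, ⟨j.1, by omega⟩), v.2, rfl⟩
    · rw [Submodule.span_le]
      rintro _ ⟨⟨v, i⟩, hv, rfl⟩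
      have hi : i = 0 ∨ i = 1 ∨ i = 2 := by fin_cases i <;> simp
      have hv' : v ∈ X := hv
      rcases hi with rfl | rfl | rfl
      · exact Submodule.subset_span ⟨(⟨v, hv'⟩, 0), rfl⟩
      · exact Submodule.subset_span ⟨(⟨v, hv'⟩, 1), rfl⟩
      · rw [iasCol_two_eq]
        exact Submodule.add_mem _ (Submodule.subset_span ⟨(⟨v, hv'⟩, 0), rfl⟩)
          (Submodule.subset_span ⟨(⟨v, hv'⟩, 1), rfl⟩)
  have hrank : iasRank A (tauSet X) = (Set.range (iasPairCol A X)).finrank (ZMod 2) := by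
    rw [iasRank, Set.finrank, hspan]
  have hle : iasRank A (tauSet X) ≤ 2 * X.ncard := by
    rw [hrank, ← hcard]
    exact finrank_range_le_card _
  have hLI : LinearIndependent (ZMod 2) (iasPairCol A X) ↔
      iasRank A (tauSet X) = 2 * X.ncard := by
    rw [linearIndependent_iff_card_eq_finrank_span, hcard, hrank]
    exact eq_comm
  tfae_have 1 → 2 := fun h => le_antisymm hle h
  tfae_have 2 → 1 := fun h => h.ge
  tfae_have 2 → 3 := by
    rintro h2 C ⟨hcirc, htr⟩ hCsub
    obtain ⟨T, hTC, hTne, hTsum⟩ := (not_iasIndep_iff A C).1 hcirc.1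
    have hdep : ¬ LinearIndependent (ZMod 2) (iasPairCol A X) :=
      not_indep_of_transversal_dep A T (fun p hp => hCsub (hTC hp))
        (fun p hp q hq => htr p (hTC hp) q (hTC hq)) hTne hTsum
    exact hdep (hLI.2 h2)
  tfae_have 3 → 2 := by
    intro h3
    by_contra hne
    have hnLI : ¬ LinearIndependent (ZMod 2) (iasPairCol A X) := fun h => hne (hLI.1 h)
    obtain ⟨C, hCsub, hCtr, hCne, hCsum⟩ := exists_transversal_dep A hnLI
    have hCdep : ¬ iasIndep A ↑C := (not_iasIndep_iff A ↑C).2 ⟨C, subset_rfl, hCne, hCsum⟩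
    obtain ⟨D, hDC, hDcirc⟩ := exists_circuit_subset A C hCdep
    exact h3 ↑D ⟨hDcirc, fun p hp q hq => hCtr p (hDC hp) q (hDC hq)⟩
      (fun p hp => hCsub (hDC hp))
  tfae_finish
end
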